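/- arXiv:1105.0495 — 3 statements merged into one kernel-verified Lean document; each statement's English description precedes it below -/
import Mathlib

section
/- Let G : ℝ → ℝ be twice continuously differentiable with compact support. Then lim_{N→∞} N^{1/4} · sup_{x∈ℤ} | T_{γ,ℓ} G (x) − 2γ̄ · G(x/N) | = 0 (with the paper's normalization T_γ h(x) = Σ_{j<x}(γ_j+γ_{j+1})(h((j+1)/N)−h(j/N)), the limiting profile of the corrected summation kernel is 2γ̄·G). -/
open Filter Topology

/-- `T_γ h (x) = Σ_{j<x} (γ_j+γ_{j+1})(h((j+1)/N)−h(j/N))`. -/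
noncomputable def Tgamma (γ : ℤ → ℝ) (N : ℕ) (h : ℝ → ℝ) (x : ℤ) : ℝ :=
  ∑' j : ℤ, if j < x then (γ j + γ (j + 1)) * (h ((j + 1) / N) - h (j / N)) else 0

/-- `T_{γ,h} = Σ_{x∈ℤ} (γ_x+γ_{x+1})(h((x+1)/N)−h(x/N))`. -/
noncomputable def TgammaTot (γ : ℤ → ℝ) (N : ℕ) (h : ℝ → ℝ) : ℝ :=
  ∑' x : ℤ, (γ x + γ (x + 1)) * (h ((x + 1) / N) - h (x / N))

/-- `g(q) = g̃(q/ℓ)` with `ℓ = N^{1/4}`. -/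
noncomputable def gfun (gt : ℝ → ℝ) (N : ℕ) (q : ℝ) : ℝ :=
  gt (q / (N : ℝ) ^ ((1 : ℝ) / 4))

/-- The corrected summation kernel `T_{γ,ℓ}G(x) = T_γ G(x) − (T_{γ,G}/T_{γ,g})·T_γ g(x)`. -/
noncomputable def Tcorr (γ : ℤ → ℝ) (gt : ℝ → ℝ) (N : ℕ) (G : ℝ → ℝ) (x : ℤ) : ℝ :=
  Tgamma γ N G x - (TgammaTot γ N G / TgammaTot γ N (gfun gt N)) * Tgamma γ N (gfun gt N) x

/- ### Auxiliary lemmas -/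

private lemma sum_Icc_succ_int (f : ℤ → ℝ) (a b : ℤ) (h : a ≤ b + 1) :
    ∑ j ∈ Finset.Icc a (b + 1), f j = (∑ j ∈ Finset.Icc a b, f j) + f (b + 1) := by
  have : Finset.Icc a (b + 1) = insert (b + 1) (Finset.Icc a b) := by
    ext j; simp only [Finset.mem_Icc, Finset.mem_insert]; omega
  rw [this, Finset.sum_insert (by simp)]
  ring

private lemma telescope_int (f : ℤ → ℝ) (a : ℤ) : ∀ b : ℤ, a - 1 ≤ b →
    ∑ j ∈ Finset.Icc a b, (f (j + 1) - f j) = f (b + 1) - f a := by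
  refine Int.le_induction ?_ ?_
  · rw [show Finset.Icc a (a - 1) = ∅ by apply Finset.Icc_eq_empty; omega]
    simp
  · intro b hb ih
    rw [sum_Icc_succ_int _ a b (by omega), ih]
    ring

private lemma abel_identity (d v : ℤ → ℝ) (a : ℤ) : ∀ m : ℤ, a - 1 ≤ m →
    ∑ j ∈ Finset.Icc a m, d j * v j =
      (∑ j ∈ Finset.Icc a m, (∑ k ∈ Finset.Icc a j, d k) * (v j - v (j + 1)))
        + (∑ k ∈ Finset.Icc a m, d k) * v (m + 1) := by
  refine Int.le_induction ?_ ?_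
  · rw [show Finset.Icc a (a - 1) = ∅ by apply Finset.Icc_eq_empty; omega]
    simp
  · intro m hm ih
    rw [sum_Icc_succ_int (fun j => d j * v j) a m (by omega), ih,
      sum_Icc_succ_int (fun j => (∑ k ∈ Finset.Icc a j, d k) * (v j - v (j + 1))) a m (by omega),
      sum_Icc_succ_int d a m (by omega)]
    ring

private lemma abel_bound (d v : ℤ → ℝ) (a m : ℤ) (S δ1 δ2 T : ℝ)
    (hS0 : 0 ≤ S) (hδ1 : 0 ≤ δ1) (hm : a - 1 ≤ m)
    (hS : ∀ j : ℤ, a ≤ j → j ≤ m → |∑ k ∈ Finset.Icc a j, d k| ≤ S)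
    (hv1 : ∀ j : ℤ, |v j| ≤ δ1) (hv2 : ∀ j : ℤ, |v j - v (j + 1)| ≤ δ2)
    (hT : ((m + 1 - a : ℤ) : ℝ) ≤ T) :
    |∑ j ∈ Finset.Icc a m, d j * v j| ≤ S * δ1 + T * (S * δ2) := by
  have hδ2 : 0 ≤ δ2 := le_trans (abs_nonneg _) (hv2 0)
  rcases eq_or_lt_of_le hm with hm' | hm'
  · rw [show Finset.Icc a m = ∅ by apply Finset.Icc_eq_empty; omega]
    simp only [Finset.sum_empty, abs_zero]
    have hT0 : (0:ℝ) ≤ T := le_trans (by exact_mod_cast by omega : (0:ℝ) ≤ ((m + 1 - a : ℤ) : ℝ)) hT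
    positivity
  · have ham : a ≤ m := by omega
    rw [abel_identity d v a m hm]
    have h1 : |∑ j ∈ Finset.Icc a m, (∑ k ∈ Finset.Icc a j, d k) * (v j - v (j + 1))|
        ≤ ∑ j ∈ Finset.Icc a m, S * δ2 := by
      refine le_trans (Finset.abs_sum_le_sum_abs _ _) (Finset.sum_le_sum fun j hj => ?_)
      rw [abs_mul]
      have hj' := Finset.mem_Icc.mp hj
      exact mul_le_mul (hS j hj'.1 hj'.2) (hv2 j) (abs_nonneg _) hS0
    have h2 : |(∑ k ∈ Finset.Icc a m, d k) * v (m + 1)| ≤ S * δ1 := by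
      rw [abs_mul]
      exact mul_le_mul (hS m ham le_rfl) (hv1 _) (abs_nonneg _) hS0
    calc _ ≤ |∑ j ∈ Finset.Icc a m, (∑ k ∈ Finset.Icc a j, d k) * (v j - v (j + 1))|
            + |(∑ k ∈ Finset.Icc a m, d k) * v (m + 1)| := abs_add_le _ _
      _ ≤ (∑ j ∈ Finset.Icc a m, S * δ2) + S * δ1 := add_le_add h1 h2
      _ ≤ T * (S * δ2) + S * δ1 := by
          rw [Finset.sum_const, Int.card_Icc]
          gcongr ?_ + _
          rw [nsmul_eq_mul]
          have h3 : ((m + 1 - a).toNat : ℝ) = ((m + 1 - a : ℤ) : ℝ) := by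
            norm_cast; omega
          rw [h3]
          exact mul_le_mul_of_nonneg_right hT (by positivity)
      _ = S * δ1 + T * (S * δ2) := by ring

private lemma icc_split (f : ℤ → ℝ) (a b c : ℤ) (h1 : a ≤ b + 1) (h2 : b ≤ c) :
    ∑ j ∈ Finset.Icc a c, f j = (∑ j ∈ Finset.Icc a b, f j) + ∑ j ∈ Finset.Icc (b + 1) c, f j := by
  rw [← Finset.sum_union]
  · congr 1; ext j; simp only [Finset.mem_Icc, Finset.mem_union]; omega
  · rw [Finset.disjoint_left]; intro j hj hj2
    simp only [Finset.mem_Icc] at hj hj2; omega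

private lemma lip_of_deriv (f : ℝ → ℝ) (hf : Differentiable ℝ f) (L : ℝ)
    (hL : ∀ x, |deriv f x| ≤ L) (s t : ℝ) : |f s - f t| ≤ L * |s - t| := by
  have := Convex.norm_image_sub_le_of_norm_deriv_le (s := Set.univ) (f := f)
    (fun x _ => hf x) (fun x _ => hL x) convex_univ (Set.mem_univ t) (Set.mem_univ s)
  simpa [Real.norm_eq_abs] using this

private lemma psum_origin (γ : ℤ → ℝ) (γbar B0 C α : ℝ) (hC : 0 < C) (hα0 : 0 ≤ α)
    (hB0 : 0 ≤ B0) (hγb : ∀ x : ℤ, |γ x - γbar| ≤ B0)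
    (hces1 : ∀ K : ℕ, 1 ≤ K →
      |∑ y ∈ Finset.Icc (1 : ℤ) (K : ℤ), (γ y - γbar)| ≤ C * (K : ℝ) ^ α)
    (hces2 : ∀ K : ℕ, 1 ≤ K →
      |∑ y ∈ Finset.Icc (-(K : ℤ)) (0 : ℤ), (γ y - γbar)| ≤ C * (K : ℝ) ^ α)
    (K : ℕ) (hK : 1 ≤ K) :
    ∀ m : ℤ, -(K : ℤ) - 1 ≤ m → m ≤ (K : ℤ) →
      |∑ y ∈ Finset.Icc (-(K : ℤ)) m, (γ y - γbar)| ≤ 2 * C * (K : ℝ) ^ α + B0 := by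
  have hKα : (0:ℝ) ≤ (K : ℝ) ^ α := Real.rpow_nonneg (Nat.cast_nonneg K) α
  have hneg := hces2 K hK
  intro m hm1 hm2
  rcases lt_trichotomy m 0 with hm | hm | hm
  · rcases eq_or_lt_of_le hm1 with he | he
    · rw [show Finset.Icc (-(K:ℤ)) m = ∅ by apply Finset.Icc_eq_empty; omega]
      simp only [Finset.sum_empty, abs_zero]; positivity
    · have hsplit := icc_split (fun y => γ y - γbar) (-(K:ℤ)) m 0 (by omega) (by omega)
      have key : |∑ y ∈ Finset.Icc (m+1) (0:ℤ), (γ y - γbar)| ≤ C * (K : ℝ) ^ α + B0 := by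
        rcases eq_or_lt_of_le (show m ≤ -1 by omega) with he2 | he2
        · subst he2
          rw [show Finset.Icc (-1+1 : ℤ) (0:ℤ) = {0} by norm_num, Finset.sum_singleton]
          have := hγb 0
          nlinarith
        · set K' : ℕ := (-(m+1)).toNat with hK'
          have hcast : -(K' : ℤ) = m + 1 := by omega
          have hK'1 : 1 ≤ K' := by omega
          have := hces2 K' hK'1
          rw [hcast] at this
          have hle : (K' : ℝ) ^ α ≤ (K : ℝ) ^ α := by
            apply Real.rpow_le_rpow (Nat.cast_nonneg _) _ hα0
            exact_mod_cast (by omega : K' ≤ K)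
          nlinarith
      have : ∑ y ∈ Finset.Icc (-(K:ℤ)) m, (γ y - γbar)
          = (∑ y ∈ Finset.Icc (-(K:ℤ)) (0:ℤ), (γ y - γbar))
            - ∑ y ∈ Finset.Icc (m+1) (0:ℤ), (γ y - γbar) := by linarith [hsplit]
      rw [this]
      calc _ ≤ |∑ y ∈ Finset.Icc (-(K:ℤ)) (0:ℤ), (γ y - γbar)|
              + |∑ y ∈ Finset.Icc (m+1) (0:ℤ), (γ y - γbar)| := abs_sub _ _
        _ ≤ 2 * C * (K : ℝ) ^ α + B0 := by nlinarith
  · rw [hm]; nlinarith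
  · have hsplit := icc_split (fun y => γ y - γbar) (-(K:ℤ)) 0 m (by omega) (by omega)
    have key : |∑ y ∈ Finset.Icc (0+1 : ℤ) m, (γ y - γbar)| ≤ C * (K : ℝ) ^ α := by
      set K' : ℕ := m.toNat with hK'
      have hcast : (K' : ℤ) = m := by omega
      have hK'1 : 1 ≤ K' := by omega
      have := hces1 K' hK'1
      rw [hcast] at this
      have hle : (K' : ℝ) ^ α ≤ (K : ℝ) ^ α := by
        apply Real.rpow_le_rpow (Nat.cast_nonneg _) _ hα0
        exact_mod_cast (by omega : K' ≤ K)
      calc |∑ y ∈ Finset.Icc (0+1 : ℤ) m, (γ y - γbar)|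
          = |∑ y ∈ Finset.Icc (1 : ℤ) m, (γ y - γbar)| := by norm_num
        _ ≤ C * (K' : ℝ) ^ α := this
        _ ≤ C * (K : ℝ) ^ α := by nlinarith
    rw [hsplit]
    calc _ ≤ |∑ y ∈ Finset.Icc (-(K:ℤ)) (0:ℤ), (γ y - γbar)|
            + |∑ y ∈ Finset.Icc (0+1:ℤ) m, (γ y - γbar)| := abs_add_le _ _
      _ ≤ 2 * C * (K : ℝ) ^ α + B0 := by nlinarith

private lemma psum_bound (γ : ℤ → ℝ) (γbar B0 C α : ℝ) (hC : 0 < C) (hα0 : 0 ≤ α)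
    (hB0 : 0 ≤ B0) (hγb : ∀ x : ℤ, |γ x - γbar| ≤ B0)
    (hces1 : ∀ K : ℕ, 1 ≤ K →
      |∑ y ∈ Finset.Icc (1 : ℤ) (K : ℤ), (γ y - γbar)| ≤ C * (K : ℝ) ^ α)
    (hces2 : ∀ K : ℕ, 1 ≤ K →
      |∑ y ∈ Finset.Icc (-(K : ℤ)) (0 : ℤ), (γ y - γbar)| ≤ C * (K : ℝ) ^ α)
    (K : ℕ) (hK : 1 ≤ K) (a b : ℤ) (ha : -(K : ℤ) ≤ a) (hb : b ≤ (K : ℤ)) :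
    |∑ y ∈ Finset.Icc a b, (γ y - γbar)| ≤ 2 * (2 * C * (K : ℝ) ^ α + B0) := by
  have hKα : (0:ℝ) ≤ (K : ℝ) ^ α := Real.rpow_nonneg (Nat.cast_nonneg K) α
  rcases lt_or_ge b a with hab | hab
  · rw [show Finset.Icc a b = ∅ by apply Finset.Icc_eq_empty; omega]
    simp only [Finset.sum_empty, abs_zero]; positivity
  · have hsplit := icc_split (fun y => γ y - γbar) (-(K:ℤ)) (a-1) b (by omega) (by omega)
    rw [show a - 1 + 1 = a by ring] at hsplit
    have h1 := psum_origin γ γbar B0 C α hC hα0 hB0 hγb hces1 hces2 K hK b (by omega) hb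
    have h2 := psum_origin γ γbar B0 C α hC hα0 hB0 hγb hces1 hces2 K hK (a-1) (by omega) (by omega)
    have : ∑ y ∈ Finset.Icc a b, (γ y - γbar)
        = (∑ y ∈ Finset.Icc (-(K:ℤ)) b, (γ y - γbar))
          - ∑ y ∈ Finset.Icc (-(K:ℤ)) (a-1), (γ y - γbar) := by linarith [hsplit]
    rw [this]
    calc _ ≤ |∑ y ∈ Finset.Icc (-(K:ℤ)) b, (γ y - γbar)|
            + |∑ y ∈ Finset.Icc (-(K:ℤ)) (a-1), (γ y - γbar)| := abs_sub _ _
      _ ≤ 2 * (2 * C * (K : ℝ) ^ α + B0) := by linarith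

private lemma kernel_est (γ : ℤ → ℝ) (γbar B0 C α : ℝ)
    (hC : 0 < C) (hα0 : 0 ≤ α) (hB0 : 0 ≤ B0)
    (hpsum : ∀ (K : ℕ), 1 ≤ K → ∀ a b : ℤ, -(K : ℤ) ≤ a → b ≤ (K : ℤ) →
      |∑ y ∈ Finset.Icc a b, (γ y - γbar)| ≤ 2 * (2 * C * (K : ℝ) ^ α + B0))
    (G : ℝ → ℝ) (R : ℕ) (hR : 1 ≤ R) (hGR : ∀ q : ℝ, (R : ℝ) ≤ |q| → G q = 0)
    (L1 L2 : ℝ) (hL10 : 0 ≤ L1) (hL20 : 0 ≤ L2)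
    (hGlip : ∀ s t : ℝ, |G s - G t| ≤ L1 * |s - t|)
    (hsecond : ∀ c s t : ℝ, |(G (s + c) - G s) - (G (t + c) - G t)| ≤ (L2 * |c|) * |s - t|)
    (N : ℕ) (hN : 1 ≤ N) (x : ℤ) :
    |Tgamma γ N G x - 2 * γbar * G ((x : ℝ) / N)| ≤
      2 * ((2 * (2 * C * ((R * N + 2 : ℕ) : ℝ) ^ α + B0)) * (L1 / N)
        + (2 * ((R * N : ℕ) : ℝ) + 2) * ((2 * (2 * C * ((R * N + 2 : ℕ) : ℝ) ^ α + B0)) * (L2 / (N : ℝ) ^ 2))) := by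
  have hN0 : (0 : ℝ) < N := by exact_mod_cast hN
  set M : ℤ := ((R * N : ℕ) : ℤ) with hMdef
  have hM1 : 1 ≤ M := by
    have h : 0 < R * N := Nat.mul_pos hR hN
    omega
  set u : ℤ → ℝ := fun j => G (((j : ℝ) + 1) / N) - G ((j : ℝ) / N) with hu
  set K : ℕ := R * N + 2 with hK
  have hKα : (0:ℝ) ≤ (K : ℝ) ^ α := Real.rpow_nonneg (Nat.cast_nonneg K) α
  set S : ℝ := 2 * (2 * C * (K : ℝ) ^ α + B0) with hS
  have hS0 : 0 ≤ S := by positivity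
  have hRN : ((R : ℝ) * N) = ((R * N : ℕ) : ℝ) := by push_cast; ring
  have hGz : ∀ y : ℝ, ((M : ℝ) ≤ y ∨ y ≤ -(M : ℝ)) → G (y / N) = 0 := by
    intro y hy
    have hMR : (M:ℝ) = (R : ℝ) * N := by rw [hMdef]; push_cast; ring
    have hRN1 : (1:ℝ) ≤ (R:ℝ) * N := by
      have h1 : (1:ℝ) ≤ (R:ℝ) := by exact_mod_cast hR
      have h2 : (1:ℝ) ≤ (N:ℝ) := by exact_mod_cast hN
      nlinarith
    apply hGR
    rcases hy with hy | hy
    · rw [abs_of_nonneg (div_nonneg (by nlinarith) hN0.le), le_div_iff₀ hN0]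
      nlinarith
    · rw [abs_of_nonpos (div_nonpos_of_nonpos_of_nonneg (by nlinarith) hN0.le)]
      rw [show -(y/(N:ℝ)) = (-y)/(N:ℝ) by ring, le_div_iff₀ hN0]
      nlinarith
  have husupp : ∀ j : ℤ, (j < -M ∨ M ≤ j) → u j = 0 := by
    intro j hj
    rcases hj with hj | hj
    · have h1 : ((j : ℝ) + 1) ≤ -(M:ℝ) := by exact_mod_cast (by omega : (j:ℤ) + 1 ≤ -M)
      have h2 : (j : ℝ) ≤ -(M:ℝ) := by linarith
      simp only [hu]
      rw [hGz _ (Or.inr h1), hGz _ (Or.inr h2), sub_zero]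
    · have h1 : (M:ℝ) ≤ (j : ℝ) := by exact_mod_cast hj
      have h2 : (M:ℝ) ≤ (j : ℝ) + 1 := by linarith
      simp only [hu]
      rw [hGz _ (Or.inl h1), hGz _ (Or.inl h2), sub_zero]
  set m : ℤ := min (x - 1) (M - 1) with hm
  have htg : Tgamma γ N G x = ∑ j ∈ Finset.Icc (-M) m, (γ j + γ (j + 1)) * u j := by
    rw [Tgamma]
    rw [tsum_eq_sum (s := Finset.Icc (-M) m) ?_]
    · apply Finset.sum_congr rfl
      intro j hj
      rw [if_pos]
      have := Finset.mem_Icc.mp hj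
      omega
    · intro j hj
      rw [Finset.mem_Icc] at hj
      by_cases hjx : j < x
      · rw [if_pos hjx]
        have : u j = 0 := husupp j (by omega)
        simp only [hu] at this
        rw [this, mul_zero]
      · rw [if_neg hjx]
  rcases le_or_gt x (-M) with hx | hx
  · have h1 : Finset.Icc (-M) m = ∅ := by apply Finset.Icc_eq_empty; omega
    have h2 : G ((x:ℝ)/N) = 0 := by
      apply hGz
      right
      exact_mod_cast hx
    rw [htg, h1, h2]
    simp only [Finset.sum_empty, mul_zero, sub_zero, abs_zero]
    positivity
  · have hmlb : -M - 1 ≤ m := by omega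
    have htel : ∑ j ∈ Finset.Icc (-M) m, u j = G (((m + 1 : ℤ) : ℝ) / N) - G (((-M : ℤ) : ℝ) / N) := by
      rw [show (∑ j ∈ Finset.Icc (-M) m, u j)
          = ∑ j ∈ Finset.Icc (-M) m, ((fun j : ℤ => G ((j : ℝ) / N)) (j + 1) - (fun j : ℤ => G ((j : ℝ) / N)) j) from ?_]
      · exact telescope_int (fun j : ℤ => G ((j : ℝ) / N)) (-M) m hmlb
      · apply Finset.sum_congr rfl
        intro j _
        simp only [hu]
        norm_num
    have hGm : G (((m + 1 : ℤ) : ℝ) / N) = G ((x : ℝ) / N) := by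
      rcases le_or_gt (x - 1) (M - 1) with h | h
      · have : m = x - 1 := by omega
        rw [this]
        norm_num
      · have hm' : m = M - 1 := by omega
        rw [hm', hGz ((x:ℝ)) (Or.inl (by exact_mod_cast (by omega : M ≤ x)))]
        rw [hGz (((M - 1 + 1 : ℤ)):ℝ) (Or.inl (by exact_mod_cast (by omega : M ≤ M - 1 + 1)))]
    have hGM : G (((-M : ℤ) : ℝ) / N) = 0 := hGz _ (Or.inr (by exact_mod_cast le_refl (-(M:ℝ))))
    have hid : Tgamma γ N G x - 2 * γbar * G ((x:ℝ)/N)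
        = (∑ j ∈ Finset.Icc (-M) m, (γ j - γbar) * u j)
          + ∑ j ∈ Finset.Icc (-M) m, (γ (j + 1) - γbar) * u j := by
      rw [htg, ← hGm]
      have : G (((m + 1 : ℤ) : ℝ) / N) = ∑ j ∈ Finset.Icc (-M) m, u j := by
        rw [htel, hGM, sub_zero]
      rw [this, Finset.mul_sum, ← Finset.sum_sub_distrib, ← Finset.sum_add_distrib]
      apply Finset.sum_congr rfl
      intro j _
      ring
    rw [hid]
    have hv1 : ∀ j : ℤ, |u j| ≤ L1 / N := by
      intro j
      simp only [hu]
      calc |G (((j : ℝ) + 1) / N) - G ((j : ℝ) / N)| ≤ L1 * |((j : ℝ) + 1) / N - (j : ℝ) / N| := hGlip _ _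
        _ = L1 / N := by
            rw [show ((j : ℝ) + 1) / N - (j : ℝ) / N = 1 / N by field_simp; ring]
            rw [abs_of_pos (by positivity)]
            ring
    have hv2 : ∀ j : ℤ, |u j - u (j + 1)| ≤ L2 / (N:ℝ) ^ 2 := by
      intro j
      simp only [hu]
      have hc : ((j + 1 : ℤ) : ℝ) = (j:ℝ) + 1 := by push_cast; ring
      rw [hc]
      have e2 : ((j:ℝ) + 1 + 1) / N = ((j:ℝ) + 1) / N + 1 / N := add_div _ _ _
      have e1 : ((j:ℝ) + 1) / N = (j:ℝ) / N + 1 / N := add_div _ _ _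
      rw [e2, e1]
      calc |(G ((j:ℝ)/N + 1/N) - G ((j:ℝ)/N)) - (G (((j:ℝ)/N + 1/N) + 1/N) - G ((j:ℝ)/N + 1/N))|
          ≤ (L2 * |1/(N:ℝ)|) * |(j:ℝ)/N - ((j:ℝ)/N + 1/N)| := hsecond (1/N) _ _
        _ = L2 / (N:ℝ)^2 := by
            rw [show (j:ℝ)/N - ((j:ℝ)/N + 1/N) = -(1/N) by ring, abs_neg,
              abs_of_pos (by positivity : (0:ℝ) < 1/(N:ℝ))]
            ring
    have hT : ((m + 1 - (-M) : ℤ) : ℝ) ≤ 2 * ((R * N : ℕ) : ℝ) + 2 := by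
      have : (m + 1 - (-M) : ℤ) ≤ 2 * (R * N : ℕ) + 2 := by omega
      calc ((m + 1 - (-M) : ℤ) : ℝ) ≤ ((2 * (R * N : ℕ) + 2 : ℤ) : ℝ) := by exact_mod_cast this
        _ = 2 * ((R * N : ℕ) : ℝ) + 2 := by push_cast; ring
    have hS1 : ∀ j : ℤ, -M ≤ j → j ≤ m → |∑ k ∈ Finset.Icc (-M) j, (γ k - γbar)| ≤ S := by
      intro j h1 h2
      apply hpsum K (by omega)
      · rw [hK]; push_cast; omega
      · rw [hK]; push_cast; omega
    have hS2 : ∀ j : ℤ, -M ≤ j → j ≤ m → |∑ k ∈ Finset.Icc (-M) j, (γ (k + 1) - γbar)| ≤ S := by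
      intro j h1 h2
      have hmap : ∑ k ∈ Finset.Icc (-M) j, (γ (k + 1) - γbar)
          = ∑ k ∈ Finset.Icc (-M + 1) (j + 1), (γ k - γbar) := by
        rw [← Finset.map_add_right_Icc (-M) j 1, Finset.sum_map]
        simp [addRightEmbedding_apply]
      rw [hmap]
      apply hpsum K (by omega)
      · rw [hK]; push_cast; omega
      · rw [hK]; push_cast; omega
    have hb1 : |∑ j ∈ Finset.Icc (-M) m, (γ j - γbar) * u j|
        ≤ S * (L1 / N) + (2 * ((R * N : ℕ) : ℝ) + 2) * (S * (L2 / (N:ℝ)^2)) :=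
      abel_bound (fun k => γ k - γbar) u (-M) m S (L1 / N) (L2 / (N:ℝ)^2)
        (2 * ((R * N : ℕ) : ℝ) + 2) hS0 (by positivity) (by omega) hS1 hv1 hv2 hT
    have hb2 : |∑ j ∈ Finset.Icc (-M) m, (γ (j + 1) - γbar) * u j|
        ≤ S * (L1 / N) + (2 * ((R * N : ℕ) : ℝ) + 2) * (S * (L2 / (N:ℝ)^2)) :=
      abel_bound (fun k => γ (k + 1) - γbar) u (-M) m S (L1 / N) (L2 / (N:ℝ)^2)
        (2 * ((R * N : ℕ) : ℝ) + 2) hS0 (by positivity) (by omega) hS2 hv1 hv2 hT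
    calc |(∑ j ∈ Finset.Icc (-M) m, (γ j - γbar) * u j)
            + ∑ j ∈ Finset.Icc (-M) m, (γ (j + 1) - γbar) * u j|
        ≤ |∑ j ∈ Finset.Icc (-M) m, (γ j - γbar) * u j|
            + |∑ j ∈ Finset.Icc (-M) m, (γ (j + 1) - γbar) * u j| := abs_add_le _ _
      _ ≤ _ := by
          have := add_le_add hb1 hb2
          linarith

private lemma g_facts (γ : ℤ → ℝ) (γm γp : ℝ) (hγm : 0 < γm) (hγmp : γm ≤ γp)
    (hγbd : ∀ x : ℤ, γm ≤ γ x ∧ γ x ≤ γp)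
    (gt : ℝ → ℝ) (hgtmono : Monotone gt)
    (hgt0 : ∀ q : ℝ, q ≤ 0 → gt q = 0) (hgt1 : ∀ q : ℝ, 1 ≤ q → gt q = 1)
    (N : ℕ) (hN : 1 ≤ N) :
    (∀ x : ℤ, |Tgamma γ N (gfun gt N) x| ≤ 2 * γp) ∧
      2 * γm ≤ TgammaTot γ N (gfun gt N) := by
  have hN0 : (0 : ℝ) < N := by exact_mod_cast hN
  have hN1 : (1 : ℝ) ≤ N := by exact_mod_cast hN
  have hℓ0 : 0 < (N : ℝ) ^ ((1 : ℝ) / 4) := Real.rpow_pos_of_pos hN0 _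
  have hℓN : (N : ℝ) ^ ((1 : ℝ) / 4) ≤ (N : ℝ) := by
    calc (N : ℝ) ^ ((1 : ℝ) / 4) ≤ (N : ℝ) ^ (1:ℝ) :=
          Real.rpow_le_rpow_of_exponent_le hN1 (by norm_num)
      _ = N := Real.rpow_one _
  have hgmono : Monotone (gfun gt N) := fun s t hst =>
    hgtmono ((div_le_div_iff_of_pos_right hℓ0).mpr hst)
  have hg0 : ∀ q : ℝ, q ≤ 0 → gfun gt N q = 0 := fun q hq =>
    hgt0 _ (div_nonpos_of_nonpos_of_nonneg hq hℓ0.le)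
  have hg1 : ∀ q : ℝ, (N : ℝ) ≤ q → gfun gt N q = 1 := by
    intro q hq
    apply hgt1
    rw [le_div_iff₀ hℓ0, one_mul]
    linarith
  set Q : ℤ := ((N * N : ℕ) : ℤ) with hQ
  have hQ1 : 1 ≤ Q := by
    have : 0 < N * N := Nat.mul_pos hN hN
    omega
  have hQr : (Q : ℝ) / N = (N : ℝ) := by
    rw [hQ]
    push_cast
    field_simp
  have hΔ0 : ∀ j : ℤ, 0 ≤ gfun gt N (((j:ℝ) + 1) / N) - gfun gt N ((j:ℝ) / N) := by
    intro j
    have h := hgmono ((div_le_div_iff_of_pos_right hN0).mpr (by linarith : (j:ℝ) ≤ (j:ℝ) + 1))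
    linarith
  have hsupp : ∀ j : ℤ, (j < 0 ∨ Q ≤ j) →
      gfun gt N (((j:ℝ) + 1) / N) - gfun gt N ((j:ℝ) / N) = 0 := by
    intro j hj
    rcases hj with hj | hj
    · have h1 : ((j:ℝ) + 1) ≤ 0 := by exact_mod_cast (by omega : (j:ℤ) + 1 ≤ 0)
      rw [hg0 _ (div_nonpos_of_nonpos_of_nonneg h1 hN0.le),
        hg0 _ (div_nonpos_of_nonpos_of_nonneg (by linarith) hN0.le)]
      ring
    · have h1 : (Q:ℝ) ≤ (j:ℝ) := by exact_mod_cast hj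
      have h2 : (N:ℝ) ≤ (j:ℝ) / N := by
        calc (N:ℝ) = (Q:ℝ) / N := hQr.symm
          _ ≤ (j:ℝ) / N := (div_le_div_iff_of_pos_right hN0).mpr h1
      have h3 : (N:ℝ) ≤ ((j:ℝ) + 1) / N := by
        calc (N:ℝ) ≤ (j:ℝ) / N := h2
          _ ≤ ((j:ℝ) + 1) / N := (div_le_div_iff_of_pos_right hN0).mpr (by linarith)
      rw [hg1 _ h2, hg1 _ h3]
      ring
  have htel : ∑ j ∈ Finset.Icc (0:ℤ) (Q - 1),
      (gfun gt N (((j:ℝ) + 1) / N) - gfun gt N ((j:ℝ) / N)) = 1 := by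
    have := telescope_int (fun j : ℤ => gfun gt N ((j:ℝ) / N)) 0 (Q - 1) (by omega)
    have heq : ∑ j ∈ Finset.Icc (0:ℤ) (Q - 1),
        (gfun gt N (((j:ℝ) + 1) / N) - gfun gt N ((j:ℝ) / N))
        = ∑ j ∈ Finset.Icc (0:ℤ) (Q - 1),
          ((fun j : ℤ => gfun gt N ((j:ℝ) / N)) (j + 1) - (fun j : ℤ => gfun gt N ((j:ℝ) / N)) j) := by
      apply Finset.sum_congr rfl
      intro j _
      norm_num
    rw [heq, this, show (Q - 1 + 1 : ℤ) = Q by ring]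
    have e1 : gfun gt N ((Q:ℝ) / N) = 1 := hg1 _ (by rw [hQr])
    have e0 : gfun gt N (((0:ℤ):ℝ) / N) = 0 := hg0 _ (by norm_num)
    show gfun gt N ((Q:ℝ) / N) - gfun gt N (((0:ℤ):ℝ) / N) = 1
    rw [e1, e0]
    ring
  constructor
  · intro x
    have htg : Tgamma γ N (gfun gt N) x
        = ∑ j ∈ (Finset.Icc (0:ℤ) (Q-1)).filter (· < x),
            (γ j + γ (j + 1)) * (gfun gt N (((j:ℝ) + 1) / N) - gfun gt N ((j:ℝ) / N)) := by
      rw [Tgamma, tsum_eq_sum]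
      · apply Finset.sum_congr rfl
        intro j hj
        rw [Finset.mem_filter] at hj
        rw [if_pos hj.2]
      · intro j hj
        rw [Finset.mem_filter, Finset.mem_Icc] at hj
        by_cases hjx : j < x
        · rw [if_pos hjx, hsupp j (by omega), mul_zero]
        · rw [if_neg hjx]
    rw [htg]
    have step : ∀ j ∈ (Finset.Icc (0:ℤ) (Q-1)).filter (· < x),
        |(γ j + γ (j + 1)) * (gfun gt N (((j:ℝ) + 1) / N) - gfun gt N ((j:ℝ) / N))|
          ≤ (2 * γp) * (gfun gt N (((j:ℝ) + 1) / N) - gfun gt N ((j:ℝ) / N)) := by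
      intro j _
      rw [abs_mul, abs_of_nonneg (hΔ0 j)]
      apply mul_le_mul_of_nonneg_right _ (hΔ0 j)
      rw [abs_of_pos (by nlinarith [(hγbd j).1, (hγbd (j+1)).1])]
      nlinarith [(hγbd j).2, (hγbd (j+1)).2]
    calc |∑ j ∈ (Finset.Icc (0:ℤ) (Q-1)).filter (· < x),
            (γ j + γ (j + 1)) * (gfun gt N (((j:ℝ) + 1) / N) - gfun gt N ((j:ℝ) / N))|
        ≤ ∑ j ∈ (Finset.Icc (0:ℤ) (Q-1)).filter (· < x),
            (2 * γp) * (gfun gt N (((j:ℝ) + 1) / N) - gfun gt N ((j:ℝ) / N)) :=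
          le_trans (Finset.abs_sum_le_sum_abs _ _) (Finset.sum_le_sum step)
      _ ≤ ∑ j ∈ Finset.Icc (0:ℤ) (Q-1),
            (2 * γp) * (gfun gt N (((j:ℝ) + 1) / N) - gfun gt N ((j:ℝ) / N)) := by
          apply Finset.sum_le_sum_of_subset_of_nonneg (Finset.filter_subset _ _)
          intro j _ _
          exact mul_nonneg (by nlinarith) (hΔ0 j)
      _ = 2 * γp := by rw [← Finset.mul_sum, htel, mul_one]
  · have htot : TgammaTot γ N (gfun gt N)
        = ∑ j ∈ Finset.Icc (0:ℤ) (Q-1),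
            (γ j + γ (j + 1)) * (gfun gt N (((j:ℝ) + 1) / N) - gfun gt N ((j:ℝ) / N)) := by
      rw [TgammaTot, tsum_eq_sum]
      intro j hj
      rw [Finset.mem_Icc] at hj
      rw [hsupp j (by omega), mul_zero]
    rw [htot]
    calc 2 * γm = ∑ j ∈ Finset.Icc (0:ℤ) (Q-1),
            (2 * γm) * (gfun gt N (((j:ℝ) + 1) / N) - gfun gt N ((j:ℝ) / N)) := by
          rw [← Finset.mul_sum, htel, mul_one]
      _ ≤ _ := by
          apply Finset.sum_le_sum
          intro j _
          apply mul_le_mul_of_nonneg_right _ (hΔ0 j)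
          nlinarith [(hγbd j).1, (hγbd (j+1)).1]

private lemma tot_eq (γ : ℤ → ℝ) (N : ℕ) (hN : 1 ≤ N) (G : ℝ → ℝ) (R : ℕ) (hR : 1 ≤ R)
    (hGR : ∀ q : ℝ, (R : ℝ) ≤ |q| → G q = 0) :
    TgammaTot γ N G = Tgamma γ N G (((R * N : ℕ) : ℤ) + 1) := by
  have hN0 : (0 : ℝ) < N := by exact_mod_cast hN
  set M : ℤ := ((R * N : ℕ) : ℤ) with hMdef
  have hGz : ∀ y : ℝ, ((M : ℝ) ≤ y ∨ y ≤ -(M : ℝ)) → G (y / N) = 0 := by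
    intro y hy
    have hMR : (M:ℝ) = (R : ℝ) * N := by rw [hMdef]; push_cast; ring
    have hRN1 : (1:ℝ) ≤ (R:ℝ) * N := by
      have h1 : (1:ℝ) ≤ (R:ℝ) := by exact_mod_cast hR
      have h2 : (1:ℝ) ≤ (N:ℝ) := by exact_mod_cast hN
      nlinarith
    apply hGR
    rcases hy with hy | hy
    · rw [abs_of_nonneg (div_nonneg (by nlinarith) hN0.le), le_div_iff₀ hN0]
      nlinarith
    · rw [abs_of_nonpos (div_nonpos_of_nonpos_of_nonneg (by nlinarith) hN0.le)]
      rw [show -(y/(N:ℝ)) = (-y)/(N:ℝ) by ring, le_div_iff₀ hN0]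
      nlinarith
  have husupp : ∀ j : ℤ, (j < -M ∨ M ≤ j) → G (((j:ℝ) + 1) / N) - G ((j:ℝ) / N) = 0 := by
    intro j hj
    rcases hj with hj | hj
    · have h1 : ((j : ℝ) + 1) ≤ -(M:ℝ) := by exact_mod_cast (by omega : (j:ℤ) + 1 ≤ -M)
      have h2 : (j : ℝ) ≤ -(M:ℝ) := by linarith
      rw [hGz _ (Or.inr h1), hGz _ (Or.inr h2), sub_zero]
    · have h1 : (M:ℝ) ≤ (j : ℝ) := by exact_mod_cast hj
      have h2 : (M:ℝ) ≤ (j : ℝ) + 1 := by linarith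
      rw [hGz _ (Or.inl h1), hGz _ (Or.inl h2), sub_zero]
  rw [TgammaTot, Tgamma,
    tsum_eq_sum (s := Finset.Icc (-M) M)
      (fun j hj => by
        rw [Finset.mem_Icc] at hj
        rw [husupp j (by omega), mul_zero]),
    tsum_eq_sum (s := Finset.Icc (-M) M)
      (fun j hj => by
        rw [Finset.mem_Icc] at hj
        by_cases hjx : j < M + 1
        · rw [if_pos hjx, husupp j (by omega), mul_zero]
        · rw [if_neg hjx])]
  apply Finset.sum_congr rfl
  intro j hj
  rw [Finset.mem_Icc] at hj
  rw [if_pos (by omega)]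

set_option maxHeartbeats 2000000 in
/-- Lemma 3.2 (first claim) of the paper: for `G ∈ C²_0(ℝ)`,
`lim_{N→∞} N^{1/4} sup_{x∈ℤ} |T_{γ,ℓ}G(x) − 2γ̄ G(x/N)| = 0`. -/
theorem corrected_kernel_uniform_convergence
    (γ : ℤ → ℝ) (γm γp : ℝ) (hγm : 0 < γm) (hγmp : γm ≤ γp)
    (hγbd : ∀ x : ℤ, γm ≤ γ x ∧ γ x ≤ γp)
    (γbar : ℝ) (hγbar : 0 < γbar)
    (C : ℝ) (hC : 0 < C) (α : ℝ) (hα0 : 0 ≤ α) (hα : α < 3 / 4)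
    (hces1 : ∀ K : ℕ, 1 ≤ K →
      |∑ y ∈ Finset.Icc (1 : ℤ) (K : ℤ), (γ y - γbar)| ≤ C * (K : ℝ) ^ α)
    (hces2 : ∀ K : ℕ, 1 ≤ K →
      |∑ y ∈ Finset.Icc (-(K : ℤ)) (0 : ℤ), (γ y - γbar)| ≤ C * (K : ℝ) ^ α)
    (θ : ℝ) (hθ0 : 0 < θ) (hθ1 : θ < 1 / 2)
    (gt : ℝ → ℝ) (hgtC2 : ContDiff ℝ 2 gt) (hgtmono : Monotone gt)
    (hgt0 : ∀ q : ℝ, q ≤ 0 → gt q = 0) (hgt1 : ∀ q : ℝ, 1 ≤ q → gt q = 1)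
    (hgtid : ∀ q ∈ Set.Icc θ (1 - θ), gt q = q)
    (G : ℝ → ℝ) (hG : ContDiff ℝ 2 G) (hGsupp : HasCompactSupport G) :
    Tendsto
      (fun N : ℕ => (N : ℝ) ^ ((1 : ℝ) / 4) *
        ⨆ x : ℤ, |Tcorr γ gt N G x - 2 * γbar * G ((x : ℝ) / N)|)
      atTop (nhds 0) := by
  -- basic bounds on γ
  have hγb : ∀ x : ℤ, |γ x - γbar| ≤ γp + γbar := by
    intro x
    have h := hγbd x
    rw [abs_le]
    constructor <;> nlinarith
  have hB0 : (0:ℝ) ≤ γp + γbar := by nlinarith [(hγbd 0).1]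
  have hpsum : ∀ (K : ℕ), 1 ≤ K → ∀ a b : ℤ, -(K : ℤ) ≤ a → b ≤ (K : ℤ) →
      |∑ y ∈ Finset.Icc a b, (γ y - γbar)| ≤ 2 * (2 * C * (K : ℝ) ^ α + (γp + γbar)) :=
    fun K hK a b ha hb =>
      psum_bound γ γbar (γp + γbar) C α hC hα0 hB0 hγb hces1 hces2 K hK a b ha hb
  -- support radius of G
  obtain ⟨r, hr⟩ := hGsupp.isBounded.subset_closedBall 0
  set R : ℕ := ⌈r⌉₊ + 1 with hRdef
  have hR1 : 1 ≤ R := by omega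
  have hGR : ∀ q : ℝ, (R:ℝ) ≤ |q| → G q = 0 := by
    intro q hq
    apply image_eq_zero_of_notMem_tsupport
    intro hmem
    have h1 := hr hmem
    rw [Metric.mem_closedBall, Real.dist_eq, sub_zero] at h1
    have h2 : r ≤ (⌈r⌉₊ : ℝ) := Nat.le_ceil r
    have h3 : (R:ℝ) = (⌈r⌉₊ : ℝ) + 1 := by rw [hRdef]; push_cast; ring
    linarith
  -- derivative bounds
  have hGdiff : Differentiable ℝ G := hG.differentiable (by norm_num)
  have hG' : ContDiff ℝ 1 (deriv G) := (contDiff_succ_iff_deriv.mp (by norm_num at hG ⊢; exact hG)).2.2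
  have hG'diff : Differentiable ℝ (deriv G) := hG'.differentiable one_ne_zero
  obtain ⟨L1, hL1⟩ := hGsupp.deriv.exists_bound_of_continuous (hG.continuous_deriv (by norm_num))
  have hL10 : 0 ≤ L1 := le_trans (norm_nonneg _) (hL1 0)
  obtain ⟨L2, hL2⟩ := hGsupp.deriv.deriv.exists_bound_of_continuous (hG'.continuous_deriv le_rfl)
  have hL20 : 0 ≤ L2 := le_trans (norm_nonneg _) (hL2 0)
  have hGlip : ∀ s t : ℝ, |G s - G t| ≤ L1 * |s - t| :=
    lip_of_deriv G hGdiff L1 (fun y => by simpa using hL1 y)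
  have hG'lip : ∀ s t : ℝ, |deriv G s - deriv G t| ≤ L2 * |s - t| :=
    lip_of_deriv _ hG'diff L2 (fun y => by simpa using hL2 y)
  have hsecond : ∀ c s t : ℝ, |(G (s + c) - G s) - (G (t + c) - G t)| ≤ (L2 * |c|) * |s - t| := by
    intro c s t
    have hd1 : Differentiable ℝ (fun y : ℝ => G (y + c)) :=
      hGdiff.comp (differentiable_id.add_const c)
    have hdiff : Differentiable ℝ (fun y : ℝ => G (y + c) - G y) := hd1.sub hGdiff
    refine lip_of_deriv _ hdiff _ (fun y => ?_) s t
    have hdr : deriv (fun y : ℝ => G (y + c) - G y) y = deriv G (y + c) - deriv G y := by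
      rw [deriv_fun_sub (hd1 y) (hGdiff y), deriv_comp_add_const]
    rw [hdr]
    calc |deriv G (y + c) - deriv G y| ≤ L2 * |y + c - y| := hG'lip _ _
      _ = L2 * |c| := by rw [show y + c - y = c by ring]
  -- constants
  set S1 : ℝ := 2 * (2 * C * ((R:ℝ) + 2) ^ α + (γp + γbar)) with hS1def
  clear_value S1
  have hRα : (0:ℝ) ≤ ((R:ℝ) + 2) ^ α := Real.rpow_nonneg (by positivity) α
  have hS10 : 0 ≤ S1 := by rw [hS1def]; nlinarith
  set D0 : ℝ := 2 * S1 * (L1 + (2*(R:ℝ)+2) * L2) with hD0def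
  clear_value D0
  have hD00 : 0 ≤ D0 := by
    rw [hD0def]
    have h1 : (0:ℝ) ≤ L1 + (2*(R:ℝ)+2) * L2 := by positivity
    nlinarith [mul_nonneg hS10 h1]
  set D1 : ℝ := D0 * (1 + γp/γm) with hD1def
  clear_value D1
  have hcr0 : (0:ℝ) ≤ 1 + γp/γm := by
    have h1 : (0:ℝ) ≤ γp/γm := div_nonneg (by linarith) hγm.le
    linarith
  have hD10 : 0 ≤ D1 := by
    rw [hD1def]
    exact mul_nonneg hD00 hcr0
  -- key uniform bound
  have hkey : ∀ N : ℕ, 1 ≤ N → ∀ x : ℤ,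
      |Tcorr γ gt N G x - 2 * γbar * G ((x:ℝ)/N)| ≤ D1 * (N:ℝ) ^ (α - 1) := by
    intro N hN x
    have hN0 : (0:ℝ) < N := by exact_mod_cast hN
    have hN1 : (1:ℝ) ≤ N := by exact_mod_cast hN
    obtain ⟨hgb, hgtot⟩ := g_facts γ γm γp hγm hγmp hγbd gt hgtmono hgt0 hgt1 N hN
    set E : ℝ := 2 * ((2 * (2 * C * ((R * N + 2 : ℕ) : ℝ) ^ α + (γp+γbar))) * (L1 / N)
        + (2 * ((R * N : ℕ) : ℝ) + 2) *
          ((2 * (2 * C * ((R * N + 2 : ℕ) : ℝ) ^ α + (γp+γbar))) * (L2 / (N : ℝ) ^ 2))) with hEdef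
    clear_value E
    have hke : ∀ y : ℤ, |Tgamma γ N G y - 2 * γbar * G ((y:ℝ)/N)| ≤ E := by
      intro y
      rw [hEdef]
      exact kernel_est γ γbar (γp+γbar) C α hC hα0 hB0 hpsum G R hR1 hGR
        L1 L2 hL10 hL20 hGlip hsecond N hN y
    have hE0 : 0 ≤ E := le_trans (abs_nonneg _) (hke 0)
    have htotG : |TgammaTot γ N G| ≤ E := by
      rw [tot_eq γ N hN G R hR1 hGR]
      have hzero : G (((((R * N : ℕ) : ℤ) + 1 : ℤ) : ℝ) / N) = 0 := by
        apply hGR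
        have hcast : ((((R * N : ℕ) : ℤ) + 1 : ℤ) : ℝ) = (R:ℝ) * N + 1 := by push_cast; ring
        rw [hcast, abs_of_nonneg (by positivity), le_div_iff₀ hN0]
        nlinarith
      have := hke (((R * N : ℕ) : ℤ) + 1)
      rw [hzero, mul_zero, sub_zero] at this
      exact this
    have hTotg0 : 0 < TgammaTot γ N (gfun gt N) := lt_of_lt_of_le (by linarith) hgtot
    have hcorr : |Tcorr γ gt N G x - 2*γbar*G ((x:ℝ)/N)| ≤ E + E / (2*γm) * (2*γp) := by
      have h1 : Tcorr γ gt N G x - 2*γbar*G ((x:ℝ)/N)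
          = (Tgamma γ N G x - 2*γbar*G ((x:ℝ)/N))
            - (TgammaTot γ N G / TgammaTot γ N (gfun gt N)) * Tgamma γ N (gfun gt N) x := by
        rw [Tcorr]; ring
      rw [h1]
      refine le_trans (abs_sub _ _) (add_le_add (hke x) ?_)
      rw [abs_mul, abs_div, abs_of_pos hTotg0]
      apply mul_le_mul (div_le_div₀ hE0 htotG (by linarith) hgtot) (hgb x) (abs_nonneg _)
        (div_nonneg hE0 (by linarith))
    have hKcast : ((R * N + 2 : ℕ) : ℝ) = (R:ℝ)*N + 2 := by push_cast; ring
    have hRNc : ((R * N : ℕ) : ℝ) = (R:ℝ)*N := by push_cast; ring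
    have hNα1 : (1:ℝ) ≤ (N:ℝ)^α := by
      rw [show (1:ℝ) = (N:ℝ)^(0:ℝ) from (Real.rpow_zero _).symm]
      exact Real.rpow_le_rpow_of_exponent_le hN1 hα0
    have hrp : ((R * N + 2 : ℕ) : ℝ) ^ α ≤ ((R:ℝ) + 2) ^ α * (N:ℝ)^α := by
      rw [hKcast, ← Real.mul_rpow (by positivity) (by positivity)]
      apply Real.rpow_le_rpow (by positivity) _ hα0
      have hexp : ((R:ℝ)+2)*(N:ℝ) = (R:ℝ)*N + 2*N := by ring
      rw [hexp]
      linarith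
    have hSbound : 2 * (2 * C * ((R * N + 2 : ℕ) : ℝ) ^ α + (γp+γbar)) ≤ S1 * (N:ℝ)^α := by
      rw [hS1def]
      have h1 : 2 * C * ((R * N + 2 : ℕ) : ℝ) ^ α ≤ 2 * C * (((R:ℝ) + 2) ^ α * (N:ℝ)^α) :=
        mul_le_mul_of_nonneg_left hrp (by positivity)
      have h2 : (γp+γbar) ≤ (γp+γbar) * (N:ℝ)^α := le_mul_of_one_le_right hB0 hNα1
      calc 2 * (2 * C * ((R * N + 2 : ℕ) : ℝ) ^ α + (γp+γbar))
          ≤ 2 * (2 * C * (((R:ℝ) + 2) ^ α * (N:ℝ)^α) + (γp+γbar) * (N:ℝ)^α) := by linarith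
        _ = 2 * (2 * C * ((R:ℝ) + 2) ^ α + (γp + γbar)) * (N:ℝ)^α := by ring
    have hED : E ≤ D0 * (N:ℝ)^(α-1) := by
      have hpow : (N:ℝ)^(α-1) = (N:ℝ)^α / N := by
        rw [Real.rpow_sub hN0, Real.rpow_one]
      have hterm1 : (2 * (2 * C * ((R * N + 2 : ℕ) : ℝ) ^ α + (γp+γbar))) * (L1 / N)
          ≤ (S1 * (N:ℝ)^α) * (L1/N) := mul_le_mul_of_nonneg_right hSbound (by positivity)
      have hcnt : (2 * ((R * N : ℕ) : ℝ) + 2) ≤ (2*(R:ℝ)+2) * N := by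
        rw [hRNc, show (2*(R:ℝ)+2) * (N:ℝ) = 2*((R:ℝ)*N) + 2*N by ring]
        linarith
      have hSN0 : 0 ≤ 2 * (2 * C * ((R * N + 2 : ℕ) : ℝ) ^ α + (γp+γbar)) := by
        have h1 := mul_nonneg (mul_nonneg (by norm_num : (0:ℝ) ≤ 2) hC.le)
          (Real.rpow_nonneg (Nat.cast_nonneg (R * N + 2)) α)
        linarith
      have hterm2 : (2 * ((R * N : ℕ) : ℝ) + 2) *
            ((2 * (2 * C * ((R * N + 2 : ℕ) : ℝ) ^ α + (γp+γbar))) * (L2 / (N : ℝ) ^ 2))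
          ≤ ((2*(R:ℝ)+2) * N) * ((S1 * (N:ℝ)^α) * (L2 / (N : ℝ) ^ 2)) := by
        apply mul_le_mul hcnt (mul_le_mul_of_nonneg_right hSbound (by positivity))
          (mul_nonneg hSN0 (by positivity)) (by positivity)
      have heq : (S1 * (N:ℝ)^α) * (L1/N) + ((2*(R:ℝ)+2) * N) * ((S1 * (N:ℝ)^α) * (L2 / (N : ℝ) ^ 2))
          = (2 * S1 * (L1 + (2*(R:ℝ)+2) * L2)) * ((N:ℝ)^α / N) / 2 := by
        field_simp
      calc E ≤ 2 * ((S1 * (N:ℝ)^α) * (L1/N)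
              + ((2*(R:ℝ)+2) * N) * ((S1 * (N:ℝ)^α) * (L2 / (N : ℝ) ^ 2))) := by
            rw [hEdef]
            linarith [hterm1, hterm2]
        _ = D0 * ((N:ℝ)^α / N) := by rw [heq, hD0def]; ring
        _ = D0 * (N:ℝ)^(α-1) := by rw [hpow]
    calc |Tcorr γ gt N G x - 2*γbar*G ((x:ℝ)/N)| ≤ E + E/(2*γm)*(2*γp) := hcorr
      _ = E * (1 + γp/γm) := by
          field_simp
      _ ≤ (D0 * (N:ℝ)^(α-1)) * (1 + γp/γm) := mul_le_mul_of_nonneg_right hED hcr0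
      _ = D1 * (N:ℝ)^(α-1) := by rw [hD1def]; ring
  -- conclude with squeeze
  apply squeeze_zero' (g := fun N : ℕ => D1 * (N:ℝ)^(α - 3/4))
  · filter_upwards with N
    exact mul_nonneg (Real.rpow_nonneg (Nat.cast_nonneg N) _)
      (Real.iSup_nonneg fun x => abs_nonneg _)
  · filter_upwards [eventually_ge_atTop 1] with N hN
    have hN0 : (0:ℝ) < N := by exact_mod_cast hN
    have hsup : (⨆ x : ℤ, |Tcorr γ gt N G x - 2*γbar*G ((x:ℝ)/N)|) ≤ D1 * (N:ℝ)^(α-1) :=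
      Real.iSup_le (fun x => hkey N hN x)
        (mul_nonneg hD10 (Real.rpow_nonneg hN0.le _))
    calc (N:ℝ)^((1:ℝ)/4) * (⨆ x : ℤ, |Tcorr γ gt N G x - 2*γbar*G ((x:ℝ)/N)|)
        ≤ (N:ℝ)^((1:ℝ)/4) * (D1 * (N:ℝ)^(α-1)) :=
          mul_le_mul_of_nonneg_left hsup (Real.rpow_nonneg hN0.le _)
      _ = D1 * (N:ℝ)^(α - 3/4) := by
          rw [show α - 3/4 = (1:ℝ)/4 + (α - 1) by ring, Real.rpow_add hN0]
          ring
  · have h := (tendsto_rpow_neg_atTop (by linarith : (0:ℝ) < 3/4 - α)).comp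
      (tendsto_natCast_atTop_atTop (R := ℝ))
    have heq : (fun N : ℕ => D1 * (N:ℝ)^(α - 3/4))
        = fun N : ℕ => D1 * ((N:ℝ)^(-(3/4 - α))) := by
      funext N
      rw [show -(3/4 - α) = α - 3/4 by ring]
    rw [heq]
    simpa using h.const_mul D1
end

section
/- Entropy bound for space-averaged marginals: let β̄ > 0, let μ_β̄ = ⊗_{x∈ℤ} N(0, 1/β̄) be the product Gaussian probability measure on ℝ^ℤ, and let P be a probability measure on ℝ^ℤ with H(P | μ_β̄) ≤ C₀(2N+1), where C₀ > 0. Let k, p ≥ 0 be such that 2N+1 = (2k+1)(2p+1), and define ν = (2N+1)^{−1} Σ_{|x|≤N} (τ_x)_* P, where τ_x is the shift (τ_x η)_z = η_{x+z}. Then the relative entropy of the marginal of ν on the coordinates Λ_k = {−k,…,k} with respect to the corresponding marginal of μ_β̄ satisfies H_{Λ_k}(ν | μ_β̄) ≤ C₀(2k+1). -/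
open MeasureTheory ProbabilityTheory Filter Topology
open scoped ENNReal NNReal

/-- Relative entropy (Kullback–Leibler divergence) of two measures, defined through the
variational formula `H(P|Q) = sup_φ { ∫ φ dP − log ∫ e^φ dQ }`, the supremum being over
bounded measurable functions; valued in `EReal` (it may be `+∞`). -/
noncomputable def relEnt {α : Type*} [MeasurableSpace α] (P Q : Measure α) : EReal :=
  ⨆ φ : {φ : α → ℝ // Measurable φ ∧ ∃ M : ℝ, ∀ a, |φ a| ≤ M},
    ((∫ a, φ.1 a ∂P - Real.log (∫ a, Real.exp (φ.1 a) ∂Q) : ℝ) : EReal)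

/-- Restriction of a configuration `η : ℤ → ℝ` to the coordinates in `Λ_k = {−k,…,k}`. -/
def restrictBox (k : ℕ) (η : ℤ → ℝ) : ↥(Finset.Icc (-(k : ℤ)) (k : ℤ)) → ℝ :=
  fun i => η i.1

/-- The shift `τ_x` on configurations: `(τ_x η)_z = η_{x+z}`. -/
def shiftBy (x : ℤ) (η : ℤ → ℝ) : ℤ → ℝ := fun z => η (x + z)

/-! ### Auxiliary material -/

/-- Restriction to a general finset of coordinates. -/
def restrictTo (s : Finset ℤ) (η : ℤ → ℝ) : s → ℝ := fun i => η i.1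

lemma measurable_restrictTo (s : Finset ℤ) : Measurable (restrictTo s) :=
  measurable_pi_lambda _ fun _ => measurable_pi_apply _

lemma integrable_of_bdd {α : Type*} [MeasurableSpace α] {μ : Measure α} [IsFiniteMeasure μ]
    {f : α → ℝ} (hf : Measurable f) (M : ℝ) (hb : ∀ a, |f a| ≤ M) : Integrable f μ :=
  ⟨hf.aestronglyMeasurable, HasFiniteIntegral.of_bounded (C := M)
    (Filter.Eventually.of_forall fun a => by simpa [Real.norm_eq_abs] using hb a)⟩

/-- Factorization of the integral of a product of two functions of disjoint coordinate
blocks, when all finite-dimensional marginals of `μ` are product measures. -/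
lemma integral_mul_of_disjoint (μ : Measure (ℤ → ℝ)) (ν : Measure ℝ) [SigmaFinite ν]
    (hμprod : ∀ s : Finset ℤ, Measure.map (restrictTo s) μ = Measure.pi fun _ : s => ν)
    {S T : Finset ℤ} (h : Disjoint S T)
    {F : (S → ℝ) → ℝ} {G : (T → ℝ) → ℝ} (hF : Measurable F) (hG : Measurable G) :
    ∫ η, F (restrictTo S η) * G (restrictTo T η) ∂μ
      = (∫ η, F (restrictTo S η) ∂μ) * ∫ η, G (restrictTo T η) ∂μ := by
  classical
  set jS : ((↥(S ∪ T)) → ℝ) → (S → ℝ) := fun ζ i => ζ ⟨i.1, Finset.mem_union_left _ i.2⟩ with hjS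
  set jT : ((↥(S ∪ T)) → ℝ) → (T → ℝ) := fun ζ i => ζ ⟨i.1, Finset.mem_union_right _ i.2⟩ with hjT
  have hjSm : Measurable jS := measurable_pi_lambda _ fun i => measurable_pi_apply _
  have hjTm : Measurable jT := measurable_pi_lambda _ fun i => measurable_pi_apply _
  have key : ∀ (a : S → ℝ) (b : T → ℝ),
      jS (MeasurableEquiv.piFinsetUnion (fun _ => ℝ) h (a, b)) = a ∧
      jT (MeasurableEquiv.piFinsetUnion (fun _ => ℝ) h (a, b)) = b := by
    intro a b
    have ha : jS (MeasurableEquiv.piFinsetUnion (fun _ => ℝ) h (a, b)) = a := by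
      funext i
      have hmem : (⟨i.1, Finset.mem_union_left _ i.2⟩ : ↥(S ∪ T))
          = Equiv.Finset.union S T h (Sum.inl i) := rfl
      show (MeasurableEquiv.piFinsetUnion (fun _ => ℝ) h (a, b)) ⟨i.1, _⟩ = a i
      rw [hmem]
      simp only [MeasurableEquiv.piFinsetUnion, MeasurableEquiv.trans_apply,
        MeasurableEquiv.coe_piCongrLeft, Equiv.piCongrLeft_apply_apply]
      rfl
    have hb : jT (MeasurableEquiv.piFinsetUnion (fun _ => ℝ) h (a, b)) = b := by
      funext i
      have hmem : (⟨i.1, Finset.mem_union_right _ i.2⟩ : ↥(S ∪ T))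
          = Equiv.Finset.union S T h (Sum.inr i) := rfl
      show (MeasurableEquiv.piFinsetUnion (fun _ => ℝ) h (a, b)) ⟨i.1, _⟩ = b i
      rw [hmem]
      simp only [MeasurableEquiv.piFinsetUnion, MeasurableEquiv.trans_apply,
        MeasurableEquiv.coe_piCongrLeft, Equiv.piCongrLeft_apply_apply]
      rfl
    exact ⟨ha, hb⟩
  have hmp := measurePreserving_piFinsetUnion h (fun _ : ℤ => ν)
  calc ∫ η, F (restrictTo S η) * G (restrictTo T η) ∂μ
      = ∫ ζ, F (jS ζ) * G (jT ζ) ∂(Measure.map (restrictTo (S ∪ T)) μ) := by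
        rw [integral_map (measurable_restrictTo _).aemeasurable
          (show Measurable fun ζ => F (jS ζ) * G (jT ζ) from
            (hF.comp hjSm).mul (hG.comp hjTm)).aestronglyMeasurable]
        rfl
    _ = ∫ ζ, F (jS ζ) * G (jT ζ) ∂(Measure.pi fun _ : ↥(S ∪ T) => ν) := by
        rw [hμprod (S ∪ T)]
    _ = ∫ ab, F (jS (MeasurableEquiv.piFinsetUnion (fun _ => ℝ) h ab))
          * G (jT (MeasurableEquiv.piFinsetUnion (fun _ => ℝ) h ab))
          ∂((Measure.pi fun _ : S => ν).prod (Measure.pi fun _ : T => ν)) :=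
        (hmp.integral_comp (MeasurableEquiv.piFinsetUnion (fun _ => ℝ) h).measurableEmbedding
          _).symm
    _ = ∫ ab : (S → ℝ) × (T → ℝ), F ab.1 * G ab.2
          ∂((Measure.pi fun _ : S => ν).prod (Measure.pi fun _ : T => ν)) := by
        congr 1
        funext ab
        rw [(key ab.1 ab.2).1, (key ab.1 ab.2).2]
    _ = (∫ a, F a ∂(Measure.pi fun _ : S => ν)) * ∫ b, G b ∂(Measure.pi fun _ : T => ν) :=
        integral_prod_mul F G
    _ = (∫ η, F (restrictTo S η) ∂μ) * ∫ η, G (restrictTo T η) ∂μ := by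
        rw [← hμprod S, ← hμprod T,
          integral_map (measurable_restrictTo _).aemeasurable hF.aestronglyMeasurable,
          integral_map (measurable_restrictTo _).aemeasurable hG.aestronglyMeasurable]

lemma integral_prod_blocks (μ : Measure (ℤ → ℝ)) [IsProbabilityMeasure μ]
    (ν : Measure ℝ) [SigmaFinite ν]
    (hμprod : ∀ s : Finset ℤ, Measure.map (restrictTo s) μ = Measure.pi fun _ : s => ν)
    (m : ℕ) (B : ℕ → Finset ℤ)
    (hd : ∀ i j, i < j → j < m → Disjoint (B i) (B j))
    (g : ∀ j : ℕ, ({ i // i ∈ B j } → ℝ) → ℝ) (hg : ∀ j, Measurable (g j)) :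
    ∫ η, ∏ j ∈ Finset.range m, g j (restrictTo (B j) η) ∂μ
      = ∏ j ∈ Finset.range m, ∫ η, g j (restrictTo (B j) η) ∂μ := by
  classical
  induction m with
  | zero => simp
  | succ n ih =>
    set T := (Finset.range n).biUnion B with hT
    set G : ({ i // i ∈ T } → ℝ) → ℝ := fun ζ =>
      ∏ j ∈ Finset.range n, g j (fun i => if h : i.1 ∈ T then ζ ⟨i.1, h⟩ else 0) with hG
    have hGm : Measurable G := by
      apply Finset.measurable_prod
      intro j _
      apply (hg j).comp
      apply measurable_pi_lambda
      intro i
      by_cases h : i.1 ∈ T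
      · simpa [h] using (measurable_pi_apply (⟨i.1, h⟩ : { i // i ∈ T }))
      · simpa [h] using measurable_const
    have hGr : ∀ η, G (restrictTo T η) = ∏ j ∈ Finset.range n, g j (restrictTo (B j) η) := by
      intro η
      apply Finset.prod_congr rfl
      intro j hj
      congr 1
      funext i
      have hiT : i.1 ∈ T := Finset.mem_biUnion.mpr ⟨j, hj, i.2⟩
      simp only [dif_pos hiT]
      rfl
    have hdisjT : Disjoint T (B n) := by
      rw [hT, Finset.disjoint_biUnion_left]
      intro j hj
      exact hd j n (Finset.mem_range.mp hj) (Nat.lt_succ_self n)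
    calc ∫ η, ∏ j ∈ Finset.range (n + 1), g j (restrictTo (B j) η) ∂μ
        = ∫ η, G (restrictTo T η) * g n (restrictTo (B n) η) ∂μ := by
          congr 1; funext η; rw [Finset.prod_range_succ, hGr]
      _ = (∫ η, G (restrictTo T η) ∂μ) * ∫ η, g n (restrictTo (B n) η) ∂μ :=
          integral_mul_of_disjoint μ ν hμprod hdisjT hGm (hg n)
      _ = (∏ j ∈ Finset.range n, ∫ η, g j (restrictTo (B j) η) ∂μ)
            * ∫ η, g n (restrictTo (B n) η) ∂μ := by
          rw [show (∫ η, G (restrictTo T η) ∂μ)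
              = ∫ η, ∏ j ∈ Finset.range n, g j (restrictTo (B j) η) ∂μ by
            congr 1; funext η; rw [hGr],
            ih (fun i j hij hjn => hd i j hij (Nat.lt_succ_of_lt hjn))]
      _ = ∏ j ∈ Finset.range (n + 1), ∫ η, g j (restrictTo (B j) η) ∂μ := by
          rw [Finset.prod_range_succ]

lemma map_shift_restrict (μ : Measure (ℤ → ℝ)) (ν : Measure ℝ) [SigmaFinite ν]
    (hμprod : ∀ s : Finset ℤ, Measure.map (restrictTo s) μ = Measure.pi fun _ : s => ν)
    (x : ℤ) (s : Finset ℤ) :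
    Measure.map (fun η => restrictTo s (shiftBy x η)) μ = Measure.pi fun _ : s => ν := by
  classical
  set t := Finset.image (fun i : ℤ => x + i) s with ht
  let e : ({ i // i ∈ s }) ≃ ({ i // i ∈ t }) :=
    { toFun := fun i => ⟨x + i.1, Finset.mem_image_of_mem _ i.2⟩
      invFun := fun i' => ⟨i'.1 - x, by
        obtain ⟨a, ha, hax⟩ := Finset.mem_image.mp i'.2
        have : i'.1 - x = a := by omega
        rwa [this]⟩
      left_inv := fun i => Subtype.ext (by simp)
      right_inv := fun i' => Subtype.ext (by simp) }
  set E := MeasurableEquiv.piCongrLeft (fun _ : { i // i ∈ t } => ℝ) e with hE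
  have hmp : MeasurePreserving E (Measure.pi fun _ : s => ν) (Measure.pi fun _ : t => ν) :=
    measurePreserving_piCongrLeft (fun _ : { i // i ∈ t } => ν) e
  have hmps : MeasurePreserving E.symm (Measure.pi fun _ : t => ν) (Measure.pi fun _ : s => ν) :=
    hmp.symm E
  have hcomp : (fun η => restrictTo s (shiftBy x η)) = E.symm ∘ restrictTo t := by
    funext η
    funext i
    show η (x + i.1) = E.symm (restrictTo t η) i
    have : E.symm (restrictTo t η) i = restrictTo t η (e i) := rfl
    rw [this]
    rfl
  rw [hcomp, ← Measure.map_map E.symm.measurable (measurable_restrictTo t), hμprod t,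
    hmps.map_eq]

/-- The variational lower bound defining `relEnt`. -/
lemma le_relEnt {α : Type*} [MeasurableSpace α] {P Q : Measure α} (φ : α → ℝ)
    (hm : Measurable φ) (M : ℝ) (hb : ∀ a, |φ a| ≤ M) :
    ((∫ a, φ a ∂P - Real.log (∫ a, Real.exp (φ a) ∂Q) : ℝ) : EReal) ≤ relEnt P Q :=
  le_iSup (fun ψ : {φ : α → ℝ // Measurable φ ∧ ∃ M : ℝ, ∀ a, |φ a| ≤ M} =>
    ((∫ a, ψ.1 a ∂P - Real.log (∫ a, Real.exp (ψ.1 a) ∂Q) : ℝ) : EReal)) ⟨φ, hm, M, hb⟩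

/-- Reindexing map for points of `Λ_k` shifted by `x`. -/
def transport (k : ℕ) (x : ℤ)
    (ζ : { i // i ∈ Finset.Icc (x - (k : ℤ)) (x + (k : ℤ)) } → ℝ) :
    { i // i ∈ Finset.Icc (-(k : ℤ)) (k : ℤ) } → ℝ :=
  fun t => ζ ⟨x + t.1, by
    have h := t.2
    simp only [Finset.mem_Icc] at h ⊢
    omega⟩

lemma measurable_transport (k : ℕ) (x : ℤ) : Measurable (transport k x) :=
  measurable_pi_lambda _ fun _ => measurable_pi_apply _

/-- Entropy bound for space-averaged marginals: if `H(P | μ_β̄) ≤ C₀(2N+1)` and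
`2N+1 = (2k+1)(2p+1)`, then the spatial average
`ν = (2N+1)⁻¹ Σ_{|x|≤N} (τ_x)_* P` satisfies `H_{Λ_k}(ν | μ_β̄) ≤ C₀(2k+1)`. -/
theorem entropy_bound_space_average
    (βb : ℝ) (hβb : 0 < βb)
    (μ : Measure (ℤ → ℝ)) (hμ : IsProbabilityMeasure μ)
    (hμprod : ∀ s : Finset ℤ,
      Measure.map (fun η (i : s) => η i.1) μ =
        Measure.pi fun _ : s => gaussianReal 0 (Real.toNNReal βb⁻¹))
    (P : Measure (ℤ → ℝ)) (hP : IsProbabilityMeasure P)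
    (C₀ : ℝ) (hC₀ : 0 < C₀) (N k p : ℕ)
    (hNkp : 2 * N + 1 = (2 * k + 1) * (2 * p + 1))
    (hent : relEnt P μ ≤ ((C₀ * (2 * N + 1) : ℝ) : EReal)) :
    relEnt
      (Measure.map (restrictBox k)
        ((2 * (N : ℝ≥0∞) + 1)⁻¹ •
          ∑ x ∈ Finset.Icc (-(N : ℤ)) (N : ℤ), Measure.map (shiftBy x) P))
      (Measure.map (restrictBox k) μ)
      ≤ ((C₀ * (2 * k + 1) : ℝ) : EReal) := by
  classical
  have hmshift : ∀ x : ℤ, Measurable (shiftBy x) :=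
    fun x => measurable_pi_lambda _ fun z => measurable_pi_apply _
  have hmbox : Measurable (restrictBox k) := measurable_restrictTo _
  set box : Finset ℤ := Finset.Icc (-(k : ℤ)) (k : ℤ) with hbox
  set ν₀ : Measure ℝ := gaussianReal 0 (Real.toNNReal βb⁻¹) with hν₀
  have hμprod' : ∀ s : Finset ℤ, Measure.map (restrictTo s) μ = Measure.pi fun _ : s => ν₀ :=
    fun s => hμprod s
  have hboxmap : Measure.map (restrictBox k) μ = Measure.pi fun _ : box => ν₀ := hμprod' box
  have keyZ : (2 * (N : ℤ) + 1) = (2 * (k : ℤ) + 1) * (2 * (p : ℤ) + 1) := by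
    exact_mod_cast hNkp
  have keyR : (2 * (N : ℝ) + 1) = (2 * (k : ℝ) + 1) * (2 * (p : ℝ) + 1) := by
    exact_mod_cast hNkp
  apply iSup_le
  rintro ⟨φ, hφm, M, hφb⟩
  rw [show ((⟨φ, hφm, M, hφb⟩ :
      {φ : (box → ℝ) → ℝ // Measurable φ ∧ ∃ M : ℝ, ∀ a, |φ a| ≤ M}) : _).1 = φ from rfl]
  rw [EReal.coe_le_coe_iff]
  set Z : ℝ := ∫ ζ, Real.exp (φ ζ) ∂(Measure.map (restrictBox k) μ) with hZ
  set ψ : ℤ → (ℤ → ℝ) → ℝ := fun x η => φ (restrictBox k (shiftBy x η)) with hψ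
  have hψm : ∀ x, Measurable (ψ x) := fun x => hφm.comp (hmbox.comp (hmshift x))
  have hψb : ∀ x η, |ψ x η| ≤ M := fun x η => hφb _
  set a : ℤ → ℝ := fun x => ∫ η, ψ x η ∂P with ha
  set cx : ℕ → ℕ → ℤ := fun i j => -(N : ℤ) + i + j * (2 * (k : ℤ) + 1) with hcx
  -- shift invariance of the reference marginal
  have hZshift : ∀ x : ℤ, ∫ η, Real.exp (ψ x η) ∂μ = Z := by
    intro x
    have h1 : Measure.map (fun η => restrictTo box (shiftBy x η)) μ
        = Measure.pi fun _ : box => ν₀ := map_shift_restrict μ ν₀ hμprod' x box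
    rw [hZ, hboxmap, ← h1]
    exact (integral_map (show Measurable fun η => restrictTo box (shiftBy x η) from
      (measurable_restrictTo box).comp (hmshift x)).aemeasurable
      (show Measurable fun ζ : { i // i ∈ box } → ℝ => Real.exp (φ ζ) from
        Real.measurable_exp.comp hφm).aestronglyMeasurable).symm
  -- the per-residue-class entropy inequality
  have claimB : ∀ i : ℕ, ∑ j ∈ Finset.range (2 * p + 1), a (cx i j)
      ≤ C₀ * (2 * N + 1) + (2 * (p:ℝ) + 1) * Real.log Z := by
    intro i
    -- disjointness of the translated boxes
    have hdisj : ∀ j1 j2, j1 < j2 → j2 < 2 * p + 1 →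
        Disjoint (Finset.Icc (cx i j1 - (k:ℤ)) (cx i j1 + (k:ℤ)))
          (Finset.Icc (cx i j2 - (k:ℤ)) (cx i j2 + (k:ℤ))) := by
      intro j1 j2 h12 _
      have h1 : ((1:ℤ)) * (2 * (k:ℤ) + 1) ≤ ((j2:ℤ) - (j1:ℤ)) * (2 * (k:ℤ) + 1) := by
        apply mul_le_mul_of_nonneg_right _ (by positivity)
        have : (j1:ℤ) < (j2:ℤ) := by exact_mod_cast h12
        omega
      have hring : cx i j2 - cx i j1 = ((j2:ℤ) - (j1:ℤ)) * (2 * (k:ℤ) + 1) := by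
        simp only [hcx]; ring
      have hc : cx i j1 + (2 * (k:ℤ) + 1) ≤ cx i j2 := by linarith
      rw [Finset.disjoint_left]
      intro z hz1 hz2
      simp only [Finset.mem_Icc] at hz1 hz2
      omega
    -- factorization of the Laplace functional over the disjoint blocks
    have claimA : ∫ η, Real.exp (∑ j ∈ Finset.range (2 * p + 1), ψ (cx i j) η) ∂μ
        = Z ^ (2 * p + 1) := by
      set B : ℕ → Finset ℤ := fun j => Finset.Icc (cx i j - (k:ℤ)) (cx i j + (k:ℤ)) with hB
      set g : ∀ j : ℕ, ({ t // t ∈ B j } → ℝ) → ℝ :=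
        fun j ζ => Real.exp (φ (transport k (cx i j) ζ)) with hg
      have hgm : ∀ j, Measurable (g j) :=
        fun j => Real.measurable_exp.comp (hφm.comp (measurable_transport k _))
      have hfact : ∀ η, Real.exp (∑ j ∈ Finset.range (2 * p + 1), ψ (cx i j) η)
          = ∏ j ∈ Finset.range (2 * p + 1), g j (restrictTo (B j) η) := by
        intro η
        rw [Real.exp_sum]
        rfl
      calc ∫ η, Real.exp (∑ j ∈ Finset.range (2 * p + 1), ψ (cx i j) η) ∂μ
          = ∫ η, ∏ j ∈ Finset.range (2 * p + 1), g j (restrictTo (B j) η) ∂μ := by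
            congr 1; funext η; exact hfact η
        _ = ∏ j ∈ Finset.range (2 * p + 1), ∫ η, g j (restrictTo (B j) η) ∂μ :=
            integral_prod_blocks μ ν₀ hμprod' (2 * p + 1) B hdisj g hgm
        _ = ∏ j ∈ Finset.range (2 * p + 1), Z := by
            apply Finset.prod_congr rfl
            intro j _
            exact hZshift (cx i j)
        _ = Z ^ (2 * p + 1) := by rw [Finset.prod_const, Finset.card_range]
    set Φ : (ℤ → ℝ) → ℝ := fun η => ∑ j ∈ Finset.range (2 * p + 1), ψ (cx i j) η with hΦ
    have hΦm : Measurable Φ := Finset.measurable_sum _ fun j _ => hψm _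
    have hΦb : ∀ η, |Φ η| ≤ (2 * (p:ℝ) + 1) * M := by
      intro η
      calc |Φ η| ≤ ∑ j ∈ Finset.range (2 * p + 1), |ψ (cx i j) η| :=
            Finset.abs_sum_le_sum_abs _ _
        _ ≤ ∑ _j ∈ Finset.range (2 * p + 1), M := Finset.sum_le_sum fun j _ => hψb _ _
        _ = (2 * (p:ℝ) + 1) * M := by
            rw [Finset.sum_const, Finset.card_range]
            push_cast
            ring
    have hle := le_relEnt (P := P) (Q := μ) Φ hΦm _ hΦb
    have hreal : ∫ η, Φ η ∂P - Real.log (∫ η, Real.exp (Φ η) ∂μ) ≤ C₀ * (2 * N + 1) := by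
      have h2 := le_trans hle hent
      exact_mod_cast h2
    have hint : ∫ η, Φ η ∂P = ∑ j ∈ Finset.range (2 * p + 1), a (cx i j) := by
      rw [hΦ]
      exact integral_finset_sum _ fun j _ => integrable_of_bdd (hψm _) M (hψb _)
    have hlog : Real.log (∫ η, Real.exp (Φ η) ∂μ) = (2 * (p:ℝ) + 1) * Real.log Z := by
      rw [show (∫ η, Real.exp (Φ η) ∂μ) = Z ^ (2 * p + 1) from claimA, Real.log_pow]
      push_cast
      ring
    rw [hint, hlog] at hreal
    linarith
  -- reindexing of the sum over the big box
  have hsum : ∑ x ∈ Finset.Icc (-(N : ℤ)) (N : ℤ), a x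
      = ∑ pr ∈ (Finset.range (2 * k + 1)) ×ˢ (Finset.range (2 * p + 1)), a (cx pr.1 pr.2) := by
    refine (Finset.sum_bij' (fun pr _ => cx pr.1 pr.2)
      (fun x _ => (((x + N).toNat % (2 * k + 1)), ((x + N).toNat / (2 * k + 1))))
      ?_ ?_ ?_ ?_ ?_).symm
    · rintro ⟨i, j⟩ hpr
      simp only [Finset.mem_product, Finset.mem_range] at hpr
      have hi : (i : ℤ) ≤ 2 * (k:ℤ) := by exact_mod_cast Nat.lt_succ_iff.mp hpr.1
      have hj : (j : ℤ) ≤ 2 * (p:ℤ) := by exact_mod_cast Nat.lt_succ_iff.mp hpr.2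
      have hj2 : (j:ℤ) * (2 * (k:ℤ) + 1) ≤ (2 * (p:ℤ)) * (2 * (k:ℤ) + 1) :=
        mul_le_mul_of_nonneg_right hj (by positivity)
      have hj0 : (0:ℤ) ≤ (j:ℤ) * (2 * (k:ℤ) + 1) := by positivity
      have hexp : (2 * (k:ℤ) + 1) * (2 * (p:ℤ) + 1)
          = (2 * (p:ℤ)) * (2 * (k:ℤ) + 1) + 2 * (k:ℤ) + 1 := by ring
      simp only [hcx, Finset.mem_Icc]
      constructor
      · have : (0:ℤ) ≤ (i:ℤ) := Int.ofNat_nonneg i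
        linarith
      · linarith
    · intro x hx
      have hxm := Finset.mem_Icc.mp hx
      have ht0 : ((x + N).toNat : ℤ) = x + N := Int.toNat_of_nonneg (by omega)
      have ht0lt : (x + N).toNat < (2 * k + 1) * (2 * p + 1) := by
        have h1 : ((x + N).toNat : ℤ) < (2 * (k:ℤ) + 1) * (2 * (p:ℤ) + 1) := by
          rw [ht0, ← keyZ]; omega
        exact_mod_cast h1
      simp only [Finset.mem_product, Finset.mem_range]
      exact ⟨Nat.mod_lt _ (by omega), Nat.div_lt_of_lt_mul ht0lt⟩
    · rintro ⟨i, j⟩ hpr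
      simp only [Finset.mem_product, Finset.mem_range] at hpr
      have hval : cx i j + N = ((i + j * (2 * k + 1) : ℕ) : ℤ) := by
        simp only [hcx]; push_cast; ring
      have ht : (cx i j + N).toNat = i + j * (2 * k + 1) := by
        rw [hval]; exact Int.toNat_natCast _
      have hmod : (i + j * (2 * k + 1)) % (2 * k + 1) = i := by
        rw [Nat.add_mul_mod_self_right, Nat.mod_eq_of_lt hpr.1]
      have hdiv : (i + j * (2 * k + 1)) / (2 * k + 1) = j := by
        rw [Nat.add_mul_div_right _ _ (by omega : 0 < 2 * k + 1),
          Nat.div_eq_of_lt hpr.1, Nat.zero_add]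
      simp only [ht, hmod, hdiv]
    · intro x hx
      have hxm := Finset.mem_Icc.mp hx
      have ht0 : ((x + N).toNat : ℤ) = x + N := Int.toNat_of_nonneg (by omega)
      have hrq := Nat.mod_add_div' (x + N).toNat (2 * k + 1)
      have hrqZ : (((x + N).toNat % (2 * k + 1) : ℕ) : ℤ)
          + (((x + N).toNat / (2 * k + 1) : ℕ) : ℤ) * ((2 * k + 1 : ℕ) : ℤ)
          = ((x + N).toNat : ℤ) := by exact_mod_cast hrq
      simp only [hcx]
      push_cast at hrqZ ⊢
      linarith
    · intro pr hpr
      rfl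
  -- computing the integral against the averaged measure
  haveI : ∀ x : ℤ, IsProbabilityMeasure (Measure.map (shiftBy x) P) :=
    fun x => Measure.isProbabilityMeasure_map (hmshift x).aemeasurable
  have hPint : ∫ ζ, φ ζ ∂(Measure.map (restrictBox k)
      ((2 * (N : ℝ≥0∞) + 1)⁻¹ •
        ∑ x ∈ Finset.Icc (-(N : ℤ)) (N : ℤ), Measure.map (shiftBy x) P))
      = (2 * (N:ℝ) + 1)⁻¹ * ∑ x ∈ Finset.Icc (-(N : ℤ)) (N : ℤ), a x := by
    rw [integral_map hmbox.aemeasurable hφm.aestronglyMeasurable, integral_smul_measure,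
      integral_finset_sum_measure (fun x _ =>
        integrable_of_bdd (show Measurable fun η => φ (restrictBox k η) from
          hφm.comp hmbox) M (fun η => hφb _))]
    have hc : ((2 * (N : ℝ≥0∞) + 1)⁻¹).toReal = (2 * (N:ℝ) + 1)⁻¹ := by
      rw [show (2 * (N : ℝ≥0∞) + 1) = ((2 * N + 1 : ℕ) : ℝ≥0∞) by push_cast; ring,
        ← ENNReal.coe_natCast, ← ENNReal.coe_inv (by exact_mod_cast Nat.succ_ne_zero (2 * N)),
        ENNReal.coe_toReal]
      push_cast
      simp
    rw [hc, smul_eq_mul]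
    congr 1
    apply Finset.sum_congr rfl
    intro x _
    rw [integral_map (hmshift x).aemeasurable
      (show Measurable fun η => φ (restrictBox k η) from hφm.comp hmbox).aestronglyMeasurable]
  rw [hPint, hsum, Finset.sum_product]
  -- final arithmetic
  have hS : ∑ i ∈ Finset.range (2 * k + 1), ∑ j ∈ Finset.range (2 * p + 1), a (cx i j)
      ≤ (2 * (k:ℝ) + 1) * (C₀ * (2 * N + 1) + (2 * (p:ℝ) + 1) * Real.log Z) := by
    calc ∑ i ∈ Finset.range (2 * k + 1), ∑ j ∈ Finset.range (2 * p + 1), a (cx i j)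
        ≤ ∑ _i ∈ Finset.range (2 * k + 1),
            (C₀ * (2 * N + 1) + (2 * (p:ℝ) + 1) * Real.log Z) :=
          Finset.sum_le_sum fun i _ => claimB i
      _ = (2 * (k:ℝ) + 1) * (C₀ * (2 * N + 1) + (2 * (p:ℝ) + 1) * Real.log Z) := by
          rw [Finset.sum_const, Finset.card_range]
          push_cast
          ring
  have hRpos : (0:ℝ) < 2 * (N:ℝ) + 1 := by positivity
  have hmono : (2 * (N:ℝ) + 1)⁻¹
        * (∑ i ∈ Finset.range (2 * k + 1), ∑ j ∈ Finset.range (2 * p + 1), a (cx i j))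
      ≤ (2 * (N:ℝ) + 1)⁻¹
        * ((2 * (k:ℝ) + 1) * (C₀ * (2 * N + 1) + (2 * (p:ℝ) + 1) * Real.log Z)) :=
    mul_le_mul_of_nonneg_left hS (by positivity)
  have heq : (2 * (N:ℝ) + 1)⁻¹
        * ((2 * (k:ℝ) + 1) * (C₀ * (2 * N + 1) + (2 * (p:ℝ) + 1) * Real.log Z))
      = C₀ * (2 * (k:ℝ) + 1) + Real.log Z := by
    rw [keyR]
    have hk : (0:ℝ) < 2 * (k:ℝ) + 1 := by positivity
    have hp : (0:ℝ) < 2 * (p:ℝ) + 1 := by positivity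
    field_simp
  linarith
end

section
/- Stationarity of the Gibbs measures: let γ : ℤ → ℝ with 0 < γ₋ ≤ γ_x ≤ γ₊ and let β > 0. For every bounded local C¹ function f : ℝ^ℤ → ℝ with bounded partial derivatives, ℒf is μ_β-integrable and ∫ ℒf dμ_β = 0; i.e., every product Gaussian Gibbs measure μ_β satisfies the stationary Kolmogorov equation for the generator ℒ. -/
open MeasureTheory ProbabilityTheory Filter Topology
open scoped ENNReal NNReal

/-- The flip `σ_x`: negate the coordinate at `x`. -/
noncomputable def flipAt (x : ℤ) (η : ℤ → ℝ) : ℤ → ℝ := Function.update η x (-(η x))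

/-- The partial derivative `∂_{η_x} f (η)`. -/
noncomputable def pderivAt (f : (ℤ → ℝ) → ℝ) (x : ℤ) (η : ℤ → ℝ) : ℝ :=
  deriv (fun t : ℝ => f (Function.update η x t)) (η x)

/-- `f` is a bounded local `C¹` function with bounded partial derivatives, depending only
on the coordinates in the finite set `s`. -/
structure IsBoundedLocalC1 (f : (ℤ → ℝ) → ℝ) (s : Finset ℤ) : Prop where
  localized : ∀ η η' : ℤ → ℝ, (∀ i ∈ s, η i = η' i) → f η = f η'
  continuous : Continuous f
  bounded : ∃ M : ℝ, ∀ η, |f η| ≤ M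
  differentiable : ∀ (x : ℤ) (η : ℤ → ℝ),
    DifferentiableAt ℝ (fun t : ℝ => f (Function.update η x t)) (η x)
  derivBounded : ∃ M : ℝ, ∀ (x : ℤ) (η : ℤ → ℝ), |pderivAt f x η| ≤ M

/-- The generator `ℒ = A + S` acting on a local function `f` with support in `s`:
`(ℒf)(η) = Σ_x (η_{x+1}−η_{x−1}) ∂_{η_x}f(η) + Σ_x γ_x [f(η^x) − f(η)]`. -/
noncomputable def generator (γ : ℤ → ℝ) (s : Finset ℤ) (f : (ℤ → ℝ) → ℝ)
    (η : ℤ → ℝ) : ℝ :=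
  (∑ x ∈ s, (η (x + 1) - η (x - 1)) * pderivAt f x η) +
    ∑ x ∈ s, γ x * (f (flipAt x η) - f η)

section GibbsAuxSection
open Real
namespace GibbsAux

variable {v : ℝ≥0}

lemma hasDerivAt_gaussianPDFReal (hv : v ≠ 0) (x : ℝ) :
    HasDerivAt (gaussianPDFReal 0 v) (-(x / v) * gaussianPDFReal 0 v x) x := by
  have hv' : (0:ℝ) < (v:ℝ) := by
    have := hv
    positivity
  have h1 : HasDerivAt (fun y : ℝ => -(y - 0)^2 / (2 * v)) (-(x/v)) x := by
    have : HasDerivAt (fun y : ℝ => y - 0) 1 x := (hasDerivAt_id x).sub_const 0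
    have h2 := ((this.pow 2).neg).div_const (2 * (v:ℝ))
    refine h2.congr_deriv ?_
    field_simp
    ring
  have h3 : HasDerivAt (fun y : ℝ => (√(2 * π * v))⁻¹ * rexp (-(y - 0)^2 / (2 * v)))
      ((√(2 * π * v))⁻¹ * (rexp (-(x - 0)^2 / (2 * v)) * (-(x/v)))) x :=
    ((h1.exp).const_mul _)
  have : gaussianPDFReal 0 v = fun y => (√(2 * π * v))⁻¹ * rexp (-(y - 0)^2 / (2 * v)) :=
    gaussianPDFReal_def 0 v
  rw [this]
  convert h3 using 1
  simp [gaussianPDFReal]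
  ring

end GibbsAux

namespace GibbsAux

lemma integral_gaussianReal_eq (hv : v ≠ 0) (g : ℝ → ℝ) :
    ∫ x, g x ∂(gaussianReal 0 v) = ∫ x, g x * gaussianPDFReal 0 v x := by
  rw [gaussianReal_of_var_ne_zero _ hv, gaussianPDF_def]
  have h1 : (fun x => ENNReal.ofReal (gaussianPDFReal 0 v x))
      = fun x => ((gaussianPDFReal 0 v x).toNNReal : ℝ≥0∞) := rfl
  rw [h1, integral_withDensity_eq_integral_smul ((measurable_gaussianPDFReal 0 v).real_toNNReal)]
  congr 1; ext x
  simp only [NNReal.smul_def, Real.coe_toNNReal _ (gaussianPDFReal_nonneg 0 v x), smul_eq_mul]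
  ring

lemma integrable_gaussianReal_iff (hv : v ≠ 0) {g : ℝ → ℝ} :
    Integrable g (gaussianReal 0 v) ↔
      Integrable (fun x => g x * gaussianPDFReal 0 v x) volume := by
  rw [gaussianReal_of_var_ne_zero _ hv,
    integrable_withDensity_iff (measurable_gaussianPDF 0 v)
      (Eventually.of_forall fun x => ENNReal.ofReal_lt_top)]
  apply integrable_congr
  refine Eventually.of_forall fun x => ?_
  simp only [gaussianPDF, ENNReal.toReal_ofReal (gaussianPDFReal_nonneg 0 v x)]

lemma integrable_mul_gaussianPDFReal (hv : v ≠ 0) :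
    Integrable (fun t => t * gaussianPDFReal 0 v t) volume := by
  have hv' : (0:ℝ) < (v:ℝ) := by have := hv; positivity
  have hb : (0:ℝ) < (2*(v:ℝ))⁻¹ := by positivity
  have := (integrable_mul_exp_neg_mul_sq hb).const_mul (√(2 * π * v))⁻¹
  apply this.congr
  refine Eventually.of_forall fun x => ?_
  simp only [gaussianPDFReal_def]
  rw [show -(x - 0)^2 / (2*(v:ℝ)) = -((2*(v:ℝ))⁻¹ * x^2) by field_simp; ring]
  ring

lemma gaussian_ibp (hv : v ≠ 0) {h : ℝ → ℝ} (hd : ∀ t, DifferentiableAt ℝ h t)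
    {M M' : ℝ} (hb : ∀ t, |h t| ≤ M) (hb' : ∀ t, |deriv h t| ≤ M') :
    Integrable (deriv h) (gaussianReal 0 v) ∧
    Integrable (fun t => t * h t) (gaussianReal 0 v) ∧
    ∫ t, deriv h t ∂(gaussianReal 0 v) = (v:ℝ)⁻¹ * ∫ t, t * h t ∂(gaussianReal 0 v) := by
  have hv' : (0:ℝ) < (v:ℝ) := by have := hv; positivity
  set φ : ℝ → ℝ := gaussianPDFReal 0 v with hφ
  have hφm : Measurable φ := measurable_gaussianPDFReal 0 v
  have hφnn : ∀ x, 0 ≤ φ x := gaussianPDFReal_nonneg 0 v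
  have hφi : Integrable φ volume := integrable_gaussianPDFReal 0 v
  have htφ : Integrable (fun t => t * φ t) volume := integrable_mul_gaussianPDFReal hv
  have hhc : Continuous h := by
    apply continuous_iff_continuousAt.2 fun t => (hd t).continuousAt
  have hhm : Measurable h := hhc.measurable
  have hdm : Measurable (deriv h) := measurable_deriv h
  -- integrability of the two pieces times the density
  have int1 : Integrable (fun t => deriv h t * φ t) volume := by
    apply Integrable.mono' (hφi.const_mul M') ((hdm.mul hφm).aestronglyMeasurable)
    refine Eventually.of_forall fun t => ?_
    rw [Pi.mul_apply, norm_mul, Real.norm_eq_abs, Real.norm_eq_abs, abs_of_nonneg (hφnn t)]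
    exact mul_le_mul_of_nonneg_right (hb' t) (hφnn t)
  have int2 : Integrable (fun t => (t * h t) * φ t) volume := by
    apply Integrable.mono' (htφ.abs.const_mul M)
      ((((measurable_id.mul hhm).mul hφm)).aestronglyMeasurable)
    refine Eventually.of_forall fun t => ?_
    rw [Real.norm_eq_abs]
    calc |t * h t * φ t| = |h t| * |t * φ t| := by rw [abs_mul, abs_mul, abs_mul]; ring
    _ ≤ M * |t * φ t| := by
        apply mul_le_mul_of_nonneg_right (hb t) (abs_nonneg _)
  have hF : Integrable (fun t => h t * φ t) volume := by
    apply Integrable.mono' (hφi.const_mul M) ((hhm.mul hφm).aestronglyMeasurable)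
    refine Eventually.of_forall fun t => ?_
    rw [Pi.mul_apply, norm_mul, Real.norm_eq_abs, Real.norm_eq_abs, abs_of_nonneg (hφnn t)]
    exact mul_le_mul_of_nonneg_right (hb t) (hφnn t)
  have hF' : Integrable (fun t => deriv h t * φ t - (v:ℝ)⁻¹ * ((t * h t) * φ t)) volume :=
    int1.sub (int2.const_mul _)
  have hder : ∀ t, HasDerivAt (fun t => h t * φ t)
      (deriv h t * φ t - (v:ℝ)⁻¹ * ((t * h t) * φ t)) t := by
    intro t
    have h1 := ((hd t).hasDerivAt).mul (hasDerivAt_gaussianPDFReal hv t)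
    refine h1.congr_deriv ?_
    field_simp
    ring
  have key : ∫ t, (deriv h t * φ t - (v:ℝ)⁻¹ * ((t * h t) * φ t)) = 0 :=
    integral_eq_zero_of_hasDerivAt_of_integrable hder hF' hF
  rw [integral_sub int1 (int2.const_mul _), integral_const_mul, sub_eq_zero] at key
  refine ⟨(integrable_gaussianReal_iff hv).2 int1, (integrable_gaussianReal_iff hv).2 int2,
    ?_⟩
  rw [integral_gaussianReal_eq hv, integral_gaussianReal_eq hv, key]

end GibbsAux

namespace GibbsAux

lemma integrable_id_gaussianReal (hv : v ≠ 0) :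
    Integrable (fun t : ℝ => t) (gaussianReal 0 v) :=
  (integrable_gaussianReal_iff hv).2 (integrable_mul_gaussianPDFReal hv)

lemma integral_id_gaussianReal (hv : v ≠ 0) :
    ∫ t, t ∂(gaussianReal 0 v) = 0 := by
  have hv' : (0:ℝ) < (v:ℝ) := by have := hv; positivity
  obtain ⟨_, _, heq⟩ := gaussian_ibp (hv := hv) (h := fun _ => (1:ℝ))
    (fun t => differentiableAt_const 1) (M := 1) (M' := 0)
    (fun t => by norm_num) (fun t => by simp)
  simp only [deriv_const', integral_zero, mul_one] at heq
  have := heq.symm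
  rcases mul_eq_zero.1 this with h | h
  · exact absurd h (by positivity)
  · simpa using h

lemma map_neg_gaussianReal (v : ℝ≥0) :
    Measure.map (fun t : ℝ => -t) (gaussianReal 0 v) = gaussianReal 0 v := by
  have h := gaussianReal_map_const_mul (μ := 0) (v := v) (-1)
  have h2 : (fun t : ℝ => -t) = ((-1 : ℝ) * ·) := by funext t; simp
  rw [h2, h]
  norm_num

lemma integral_comp_neg_gaussianReal (hv : v ≠ 0) {g : ℝ → ℝ}
    (hg : AEStronglyMeasurable g (gaussianReal 0 v)) :
    ∫ t, g (-t) ∂(gaussianReal 0 v) = ∫ t, g t ∂(gaussianReal 0 v) := by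
  conv_rhs => rw [← map_neg_gaussianReal v]
  rw [integral_map measurable_neg.aemeasurable]
  rw [map_neg_gaussianReal v]
  exact hg

end GibbsAux

namespace GibbsAux

section Slice

variable {ι : Type*} [Fintype ι] [DecidableEq ι] {ν : Measure ℝ} [IsProbabilityMeasure ν]

lemma measurable_updateFun (a : ι) :
    Measurable fun p : (ι → ℝ) × ℝ => Function.update p.1 a p.2 := by
  apply measurable_pi_lambda
  intro i
  simp only [Function.update_apply]
  split_ifs
  · exact measurable_snd
  · exact (measurable_pi_apply i).comp measurable_fst

lemma map_update_pi (a : ι) :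
    Measure.map (fun p : (ι → ℝ) × ℝ => Function.update p.1 a p.2)
      ((Measure.pi fun _ : ι => ν).prod ν) = Measure.pi fun _ : ι => ν := by
  refine (Measure.pi_eq fun s hs => ?_).symm
  rw [Measure.map_apply (measurable_updateFun a) (MeasurableSet.univ_pi hs)]
  have hpre : (fun p : (ι → ℝ) × ℝ => Function.update p.1 a p.2) ⁻¹' Set.pi Set.univ s
      = (Set.pi Set.univ (Function.update s a Set.univ)) ×ˢ (s a) := by
    ext ⟨y, t⟩
    simp only [Set.mem_preimage, Set.mem_pi, Set.mem_univ, true_implies, Set.mem_prod,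
      Function.update_apply]
    constructor
    · intro h
      refine ⟨fun i => ?_, by simpa using h a⟩
      rcases eq_or_ne i a with rfl | hia
      · simp
      · simpa [hia] using h i
    · rintro ⟨h1, h2⟩ i
      rcases eq_or_ne i a with rfl | hia
      · simpa using h2
      · simpa [hia] using h1 i
  rw [hpre, Measure.prod_prod, Measure.pi_pi]
  have hcong : ∀ i ∈ Finset.univ,
      ν (Function.update s a Set.univ i) = Function.update (fun i => ν (s i)) a (ν Set.univ) i := by
    intro i _
    rcases eq_or_ne i a with rfl | hia
    · simp
    · rw [Function.update_of_ne hia, Function.update_of_ne hia]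
  rw [Finset.prod_congr rfl hcong, Finset.prod_update_of_mem (Finset.mem_univ a),
    measure_univ, one_mul, ← Finset.mul_prod_erase Finset.univ _ (Finset.mem_univ a), mul_comm,
    Finset.erase_eq]

lemma integrable_update_iff (a : ι) {F : (ι → ℝ) → ℝ}
    (hF : AEStronglyMeasurable F (Measure.pi fun _ : ι => ν)) :
    Integrable F (Measure.pi fun _ : ι => ν) ↔
      Integrable (fun p : (ι → ℝ) × ℝ => F (Function.update p.1 a p.2))
        ((Measure.pi fun _ : ι => ν).prod ν) := by
  rw [← map_update_pi (ν := ν) a] at hF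
  conv_lhs => rw [← map_update_pi (ν := ν) a]
  exact integrable_map_measure hF (measurable_updateFun a).aemeasurable

lemma integral_slice (a : ι) {F : (ι → ℝ) → ℝ}
    (hF : Integrable F (Measure.pi fun _ : ι => ν)) :
    ∫ y, F y ∂(Measure.pi fun _ : ι => ν)
      = ∫ y, ∫ t, F (Function.update y a t) ∂ν ∂(Measure.pi fun _ : ι => ν) := by
  have h1 : Integrable (fun p : (ι → ℝ) × ℝ => F (Function.update p.1 a p.2))
      ((Measure.pi fun _ : ι => ν).prod ν) := (integrable_update_iff a hF.1).1 hF
  conv_lhs => rw [← map_update_pi (ν := ν) a]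
  rw [integral_map (measurable_updateFun a).aemeasurable]
  · exact MeasureTheory.integral_prod _ h1
  · rw [map_update_pi]; exact hF.1

lemma integrable_eval (a : ι) (hid : Integrable (fun t : ℝ => t) ν) :
    Integrable (fun y : ι → ℝ => y a) (Measure.pi fun _ : ι => ν) := by
  rw [integrable_update_iff a ((measurable_pi_apply a).aestronglyMeasurable)]
  have h : (fun p : (ι → ℝ) × ℝ => Function.update p.1 a p.2 a) = fun p => p.2 := by
    funext p; simp
  rw [h]
  have := (integrable_const (1:ℝ) :
    Integrable _ (Measure.pi fun _ : ι => ν)).mul_prod hid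
  simpa using this

lemma integrable_eval_mul_eval (a b : ι) (hab : a ≠ b) (hid : Integrable (fun t : ℝ => t) ν) :
    Integrable (fun y : ι → ℝ => y a * y b) (Measure.pi fun _ : ι => ν) := by
  rw [integrable_update_iff (F := fun y : ι → ℝ => y a * y b) a
    (((measurable_pi_apply a).mul (measurable_pi_apply b)).aestronglyMeasurable)]
  have h : (fun p : (ι → ℝ) × ℝ => Function.update p.1 a p.2 a * Function.update p.1 a p.2 b)
      = fun p : (ι → ℝ) × ℝ => p.1 b * p.2 := by
    funext p
    rw [Function.update_self, Function.update_of_ne hab.symm]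
    ring
  rw [h]
  exact (integrable_eval b hid).mul_prod hid

end Slice

end GibbsAux

namespace GibbsAux

section FinDim

variable {ι : Type*} [Fintype ι] [DecidableEq ι]

/-- finite-dimensional partial derivative -/
noncomputable def pderivFin (g : (ι → ℝ) → ℝ) (a : ι) (y : ι → ℝ) : ℝ :=
  deriv (fun t => g (Function.update y a t)) (y a)

lemma pderivFin_update (g : (ι → ℝ) → ℝ) (a : ι) (y : ι → ℝ) (u : ℝ) :
    pderivFin g a (Function.update y a u)
      = deriv (fun t => g (Function.update y a t)) u := by
  unfold pderivFin
  simp only [Function.update_idem, Function.update_self]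

lemma differentiableAt_update {g : (ι → ℝ) → ℝ}
    (hgd : ∀ (i : ι) (y : ι → ℝ), DifferentiableAt ℝ (fun t => g (Function.update y i t)) (y i))
    (a : ι) (y : ι → ℝ) (u : ℝ) :
    DifferentiableAt ℝ (fun t => g (Function.update y a t)) u := by
  have := hgd a (Function.update y a u)
  simpa only [Function.update_idem, Function.update_self] using this

lemma measurable_pderivFin {g : (ι → ℝ) → ℝ} (hgc : Continuous g)
    (hgd : ∀ (i : ι) (y : ι → ℝ), DifferentiableAt ℝ (fun t => g (Function.update y i t)) (y i))
    (a : ι) : Measurable (pderivFin g a) := by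
  have hmeas : ∀ n : ℕ, Measurable fun y : ι → ℝ =>
      (g (Function.update y a (y a + ((n:ℝ)+1)⁻¹)) - g y) * ((n:ℝ)+1) := by
    intro n
    have hc : Continuous fun y : ι → ℝ => g (Function.update y a (y a + ((n:ℝ)+1)⁻¹)) :=
      hgc.comp (continuous_id.update a ((continuous_apply a).add continuous_const))
    exact ((hc.sub hgc).mul continuous_const).measurable
  have htend : ∀ y : ι → ℝ, Tendsto (fun n : ℕ =>
      (g (Function.update y a (y a + ((n:ℝ)+1)⁻¹)) - g y) * ((n:ℝ)+1))
      atTop (𝓝 (pderivFin g a y)) := by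
    intro y
    have hder : HasDerivAt (fun t => g (Function.update y a t)) (pderivFin g a y) (y a) :=
      (hgd a y).hasDerivAt
    have hslope := hasDerivAt_iff_tendsto_slope.1 hder
    have hu : Tendsto (fun n : ℕ => y a + ((n:ℝ)+1)⁻¹) atTop (𝓝[≠] (y a)) := by
      rw [tendsto_nhdsWithin_iff]
      constructor
      · have h0 : Tendsto (fun n : ℕ => ((n:ℝ)+1)⁻¹) atTop (𝓝 0) := by
          simpa only [one_div] using tendsto_one_div_add_atTop_nhds_zero_nat (𝕜 := ℝ)
        simpa using tendsto_const_nhds.add h0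
      · refine Eventually.of_forall fun n => ?_
        have : (0:ℝ) < ((n:ℝ)+1)⁻¹ := by positivity
        exact (lt_add_of_pos_right _ this).ne'
    have hcomp := hslope.comp hu
    apply hcomp.congr
    intro n
    simp only [Function.comp_apply, slope_def_field]
    rw [Function.update_eq_self, add_sub_cancel_left, div_inv_eq_mul]
  exact measurable_of_tendsto_metrizable hmeas (tendsto_pi_nhds.2 htend)

variable {v : ℝ≥0}

lemma integrable_of_bounded {α : Type*} [MeasurableSpace α] {P : Measure α}
    [IsFiniteMeasure P] {F : α → ℝ} (hm : AEStronglyMeasurable F P) {M : ℝ}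
    (h : ∀ x, |F x| ≤ M) : Integrable F P := by
  apply Integrable.mono' (integrable_const M) hm
  exact Eventually.of_forall fun x => by rw [Real.norm_eq_abs]; exact h x

/-- symmetry: flipping one coordinate preserves the integral -/
lemma integral_flip_eq (hv : v ≠ 0) (a : ι) {g : (ι → ℝ) → ℝ} (hgc : Continuous g)
    {M : ℝ} (hgb : ∀ y, |g y| ≤ M) :
    ∫ y, g (Function.update y a (-(y a))) ∂(Measure.pi fun _ : ι => gaussianReal 0 v)
      = ∫ y, g y ∂(Measure.pi fun _ : ι => gaussianReal 0 v) := by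
  have hFc : Continuous fun y : ι → ℝ => g (Function.update y a (-(y a))) :=
    hgc.comp (continuous_id.update a ((continuous_apply a).neg))
  have hFi : Integrable (fun y : ι → ℝ => g (Function.update y a (-(y a))))
      (Measure.pi fun _ : ι => gaussianReal 0 v) :=
    integrable_of_bounded hFc.aestronglyMeasurable (fun y => hgb _)
  have hgi : Integrable g (Measure.pi fun _ : ι => gaussianReal 0 v) :=
    integrable_of_bounded hgc.aestronglyMeasurable hgb
  rw [integral_slice a hFi, integral_slice a hgi]
  apply integral_congr_ae
  refine Eventually.of_forall fun y => ?_
  have h1 : ∀ t : ℝ, g (Function.update (Function.update y a t) a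
      (-(Function.update y a t a))) = g (Function.update y a (-t)) := by
    intro t
    rw [Function.update_self, Function.update_idem]
  simp only [h1]
  exact integral_comp_neg_gaussianReal hv
    ((hgc.comp (continuous_const.update a continuous_id)).aestronglyMeasurable)

end FinDim

end GibbsAux

namespace GibbsAux

section FinDim2

variable {ι : Type*} [Fintype ι] [DecidableEq ι] {v : ℝ≥0}

lemma integrable_prod3 (hv : v ≠ 0) (a b : ι) (hab : a ≠ b) {g : (ι → ℝ) → ℝ}
    (hgc : Continuous g) {M : ℝ} (hgb : ∀ y, |g y| ≤ M) :
    Integrable (fun y : ι → ℝ => y a * (y b * g y))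
      (Measure.pi fun _ : ι => gaussianReal 0 v) := by
  have hid := integrable_id_gaussianReal hv
  have habs := (integrable_eval_mul_eval a b hab hid).abs.const_mul M
  apply Integrable.mono' habs
  · exact ((measurable_pi_apply a).mul
      ((measurable_pi_apply b).mul hgc.measurable)).aestronglyMeasurable
  refine Eventually.of_forall fun y => ?_
  rw [Real.norm_eq_abs]
  calc |y a * (y b * g y)| = |g y| * |y a * y b| := by
        rw [abs_mul, abs_mul, abs_mul]; ring
  _ ≤ M * |y a * y b| := mul_le_mul_of_nonneg_right (hgb y) (abs_nonneg _)

/-- boundary term vanishes: coordinate `a` does not appear in `g` -/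
lemma integral_prod3_eq_zero (hv : v ≠ 0) (a b : ι) (hab : a ≠ b) {g : (ι → ℝ) → ℝ}
    (hgc : Continuous g) {M : ℝ} (hgb : ∀ y, |g y| ≤ M)
    (hga : ∀ (y : ι → ℝ) (t : ℝ), g (Function.update y a t) = g y) :
    ∫ y, y a * (y b * g y) ∂(Measure.pi fun _ : ι => gaussianReal 0 v) = 0 := by
  rw [integral_slice a (integrable_prod3 hv a b hab hgc hgb)]
  have h1 : ∀ y : ι → ℝ, ∫ t, Function.update y a t a *
      (Function.update y a t b * g (Function.update y a t)) ∂(gaussianReal 0 v) = 0 := by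
    intro y
    have h2 : ∀ t : ℝ, Function.update y a t a *
        (Function.update y a t b * g (Function.update y a t))
        = t * (y b * g y) := by
      intro t
      rw [Function.update_self, Function.update_of_ne hab.symm, hga]
    simp only [h2]
    rw [integral_mul_const, integral_id_gaussianReal hv, zero_mul]
  simp only [h1, integral_zero]

/-- the A-term integration by parts -/
lemma integral_A_term (hv : v ≠ 0) (a b c : ι) (hba : b ≠ a) (hca : c ≠ a)
    {g : (ι → ℝ) → ℝ} (hgc : Continuous g) {M M' : ℝ} (hgb : ∀ y, |g y| ≤ M)
    (hgd : ∀ (i : ι) (y : ι → ℝ), DifferentiableAt ℝ (fun t => g (Function.update y i t)) (y i))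
    (hgd' : ∀ (i : ι) (y : ι → ℝ), |pderivFin g i y| ≤ M') :
    Integrable (fun y : ι → ℝ => (y b - y c) * pderivFin g a y)
        (Measure.pi fun _ : ι => gaussianReal 0 v) ∧
    Integrable (fun y : ι → ℝ => (y b - y c) * (y a * g y))
        (Measure.pi fun _ : ι => gaussianReal 0 v) ∧
    ∫ y, (y b - y c) * pderivFin g a y ∂(Measure.pi fun _ : ι => gaussianReal 0 v)
      = (v:ℝ)⁻¹ * ∫ y, (y b - y c) * (y a * g y)
          ∂(Measure.pi fun _ : ι => gaussianReal 0 v) := by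
  have hid := integrable_id_gaussianReal hv
  have hpm := measurable_pderivFin hgc hgd a
  have int1 : Integrable (fun y : ι → ℝ => (y b - y c) * pderivFin g a y)
      (Measure.pi fun _ : ι => gaussianReal 0 v) := by
    have hbnd := (((integrable_eval b hid).abs.add (integrable_eval c hid).abs)).mul_const M'
    apply Integrable.mono' hbnd
    · exact (((measurable_pi_apply b).sub (measurable_pi_apply c)).mul
        hpm).aestronglyMeasurable
    refine Eventually.of_forall fun y => ?_
    rw [Real.norm_eq_abs, abs_mul]
    have h1 : |y b - y c| ≤ |y b| + |y c| := abs_sub _ _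
    have h2 : (0:ℝ) ≤ |y b| + |y c| := by positivity
    calc |y b - y c| * |pderivFin g a y| ≤ (|y b| + |y c|) * M' :=
      mul_le_mul h1 (hgd' a y) (abs_nonneg _) h2
    _ = _ := rfl
  have int2 : Integrable (fun y : ι → ℝ => (y b - y c) * (y a * g y))
      (Measure.pi fun _ : ι => gaussianReal 0 v) := by
    have e1 := integrable_prod3 hv b a hba hgc hgb
    have e2 := integrable_prod3 hv c a hca hgc hgb
    have := e1.sub e2
    apply this.congr
    refine Eventually.of_forall fun y => ?_
    simp only [Pi.sub_apply]
    ring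
  refine ⟨int1, int2, ?_⟩
  rw [integral_slice a int1, integral_slice a int2]
  rw [← integral_const_mul]
  apply integral_congr_ae
  refine Eventually.of_forall fun y => ?_
  have hupd : ∀ t : ℝ, Function.update y a t b = y b := fun t => Function.update_of_ne hba _ _
  have hupd' : ∀ t : ℝ, Function.update y a t c = y c := fun t => Function.update_of_ne hca _ _
  have hd : ∀ u : ℝ, DifferentiableAt ℝ (fun t => g (Function.update y a t)) u :=
    differentiableAt_update hgd a y
  have hb' : ∀ u : ℝ, |deriv (fun t => g (Function.update y a t)) u| ≤ M' := by
    intro u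
    rw [← pderivFin_update]
    exact hgd' a _
  obtain ⟨-, -, hibp⟩ := gaussian_ibp hv hd (fun u => hgb _) hb'
  have h1 : ∀ t : ℝ, (Function.update y a t b - Function.update y a t c) *
      pderivFin g a (Function.update y a t)
      = (y b - y c) * deriv (fun t => g (Function.update y a t)) t := by
    intro t
    rw [hupd, hupd', pderivFin_update]
  have h2 : ∀ t : ℝ, (Function.update y a t b - Function.update y a t c) *
      (Function.update y a t a * g (Function.update y a t))
      = (y b - y c) * (t * g (Function.update y a t)) := by
    intro t
    rw [hupd, hupd', Function.update_self]
  simp only [h1, h2]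
  rw [integral_const_mul, integral_const_mul, hibp]
  ring

end FinDim2

end GibbsAux

namespace GibbsAux

section Transfer

/-- projection onto finitely many coordinates -/
def projF (u : Finset ℤ) : (ℤ → ℝ) → (↥u → ℝ) := fun η i => η i.1

lemma measurable_projF (u : Finset ℤ) : Measurable (projF u) :=
  measurable_pi_lambda _ fun i => measurable_pi_apply _

variable {μ : Measure (ℤ → ℝ)} {u : Finset ℤ} {P : Measure (↥u → ℝ)}

lemma integral_projF (hmap : Measure.map (projF u) μ = P)
    {G : (↥u → ℝ) → ℝ} (hG : AEStronglyMeasurable G P) :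
    ∫ η, G (projF u η) ∂μ = ∫ y, G y ∂P := by
  rw [← hmap]
  exact (integral_map (measurable_projF u).aemeasurable (by rwa [hmap])).symm

lemma integrable_projF_iff (hmap : Measure.map (projF u) μ = P)
    {G : (↥u → ℝ) → ℝ} (hG : AEStronglyMeasurable G P) :
    Integrable (fun η => G (projF u η)) μ ↔ Integrable G P := by
  have h2 : Integrable G (Measure.map (projF u) μ) ↔ Integrable (fun η => G (projF u η)) μ :=
    integrable_map_measure (by rwa [← hmap] at hG) (measurable_projF u).aemeasurable
  rw [hmap] at h2
  exact h2.symm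

end Transfer

end GibbsAux

end GibbsAuxSection
open GibbsAux

/-- Stationarity of the Gibbs measures: every product Gaussian measure `μ_β`
(characterized by its finite-dimensional marginals) satisfies the stationary Kolmogorov
equation `∫ ℒf dμ_β = 0` for all bounded local `C¹` functions `f` with bounded partial
derivatives. -/
theorem gibbs_measures_are_stationary
    (γ : ℤ → ℝ) (γm γp : ℝ) (hγm : 0 < γm) (hγbd : ∀ x : ℤ, γm ≤ γ x ∧ γ x ≤ γp)
    (β : ℝ) (hβ : 0 < β)
    (μ : Measure (ℤ → ℝ)) (hμ : IsProbabilityMeasure μ)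
    (hμprod : ∀ s : Finset ℤ,
      Measure.map (fun η (i : s) => η i.1) μ =
        Measure.pi fun _ : s => gaussianReal 0 (Real.toNNReal β⁻¹)) :
    ∀ (f : (ℤ → ℝ) → ℝ) (s : Finset ℤ), IsBoundedLocalC1 f s →
      Integrable (generator γ s f) μ ∧ ∫ η, generator γ s f η ∂μ = 0 := by
  intro f s hf
  obtain ⟨M, hM⟩ := hf.bounded
  obtain ⟨M', hM'⟩ := hf.derivBounded
  set v : ℝ≥0 := Real.toNNReal β⁻¹ with hvdef
  have hv : v ≠ 0 := (Real.toNNReal_pos.2 (inv_pos.2 hβ)).ne'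
  have hvβ : ((v:ℝ))⁻¹ = β := by
    rw [hvdef, Real.coe_toNNReal _ (le_of_lt (inv_pos.2 hβ)), inv_inv]
  -- the index set
  set u : Finset ℤ := (s ∪ s.image (fun z => z + 1)) ∪ s.image (fun z => z - 1) with hudef
  have hsu : s ⊆ u := (Finset.subset_union_left.trans Finset.subset_union_left)
  have hplus : ∀ x ∈ s, x + 1 ∈ u := fun x hx =>
    Finset.subset_union_left (Finset.subset_union_right (Finset.mem_image_of_mem _ hx))
  have hminus : ∀ x ∈ s, x - 1 ∈ u := fun x hx =>
    Finset.subset_union_right (Finset.mem_image_of_mem _ hx)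
  -- the localization of f to the coordinates in u
  set extF : (↥u → ℝ) → (ℤ → ℝ) := fun y i => if h : i ∈ u then y ⟨i, h⟩ else 0 with hextF
  have hext_cont : Continuous extF := by
    apply continuous_pi
    intro i
    by_cases h : i ∈ u
    · simp only [hextF, dif_pos h]
      exact continuous_apply _
    · simp only [hextF, dif_neg h]
      exact continuous_const
  set g : (↥u → ℝ) → ℝ := fun y => f (extF y) with hgdef
  have hgc : Continuous g := hf.continuous.comp hext_cont
  have hfg : ∀ η, f η = g (projF u η) := by
    intro η
    apply hf.localized
    intro i hi
    simp only [hgdef, hextF, projF, dif_pos (hsu hi)]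
  have hext_upd : ∀ (y : ↥u → ℝ) (i : ↥u) (t : ℝ),
      extF (Function.update y i t) = Function.update (extF y) i.1 t := by
    intro y i t
    funext j
    rcases eq_or_ne j i.1 with rfl | hj
    · simp only [hextF, dif_pos i.2, Function.update_self, Subtype.coe_eta]
    · rw [Function.update_of_ne hj]
      by_cases h : j ∈ u
      · simp only [hextF, dif_pos h]
        rw [Function.update_of_ne (fun hc => hj (congrArg Subtype.val hc))]
      · simp only [hextF, dif_neg h]
  have hproj_upd : ∀ (η : ℤ → ℝ) (i : ↥u) (t : ℝ),
      projF u (Function.update η i.1 t) = Function.update (projF u η) i t := by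
    intro η i t
    funext j
    rcases eq_or_ne j i with rfl | hj
    · simp [projF]
    · rw [Function.update_of_ne hj]
      simp only [projF]
      rw [Function.update_of_ne (fun hc => hj (Subtype.ext hc))]
  have hext_pt : ∀ (y : ↥u → ℝ) (i : ↥u), extF y i.1 = y i := by
    intro y i
    simp only [hextF, dif_pos i.2, Subtype.coe_eta]
  have hgb : ∀ y, |g y| ≤ M := fun y => hM _
  have hgd : ∀ (a : ↥u) (y : ↥u → ℝ),
      DifferentiableAt ℝ (fun t => g (Function.update y a t)) (y a) := by
    intro a y
    have h1 : (fun t => g (Function.update y a t)) =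
        (fun t => f (Function.update (extF y) a.1 t)) := by
      funext t
      simp only [hgdef]
      rw [hext_upd]
    rw [h1, ← hext_pt y a]
    exact hf.differentiable a.1 (extF y)
  have hgderiv : ∀ (a : ↥u) (y : ↥u → ℝ), pderivFin g a y = pderivAt f a.1 (extF y) := by
    intro a y
    unfold pderivFin pderivAt
    have h1 : (fun t => g (Function.update y a t)) =
        (fun t => f (Function.update (extF y) a.1 t)) := by
      funext t
      simp only [hgdef]
      rw [hext_upd]
    rw [h1, hext_pt y a]
  have hgd' : ∀ (a : ↥u) (y : ↥u → ℝ), |pderivFin g a y| ≤ M' := by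
    intro a y
    rw [hgderiv]
    exact hM' _ _
  have hpderiv : ∀ (x : ℤ) (hx : x ∈ u) (η : ℤ → ℝ),
      pderivAt f x η = pderivFin g ⟨x, hx⟩ (projF u η) := by
    intro x hx η
    unfold pderivFin pderivAt
    have h1 : (fun t => f (Function.update η x t)) =
        (fun t => g (Function.update (projF u η) ⟨x, hx⟩ t)) := by
      funext t
      rw [hfg]
      exact congrArg g (hproj_upd η ⟨x, hx⟩ t)
    rw [h1]
    rfl
  have hindep : ∀ (a : ↥u), a.1 ∉ s → ∀ (y : ↥u → ℝ) (t : ℝ),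
      g (Function.update y a t) = g y := by
    intro a ha y t
    simp only [hgdef]
    rw [hext_upd]
    apply hf.localized
    intro i hi
    have : i ≠ a.1 := fun hc => ha (by rw [← hc]; exact hi)
    rw [Function.update_of_ne this]
  have hmap : Measure.map (projF u) μ = Measure.pi fun _ : ↥u => gaussianReal 0 v := hμprod u
  -- the two parts of the generator, in finitely many coordinates
  set A : (↥u → ℝ) → ℝ := fun y => ∑ x ∈ s.attach,
      (y ⟨x.1 + 1, hplus x.1 x.2⟩ - y ⟨x.1 - 1, hminus x.1 x.2⟩) *
        pderivFin g ⟨x.1, hsu x.2⟩ y with hAdef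
  set S : (↥u → ℝ) → ℝ := fun y => ∑ x ∈ s.attach,
      γ x.1 * (g (Function.update y ⟨x.1, hsu x.2⟩ (-(y ⟨x.1, hsu x.2⟩))) - g y) with hSdef
  have hGen : ∀ η, generator γ s f η = A (projF u η) + S (projF u η) := by
    intro η
    unfold generator
    congr 1
    · rw [← Finset.sum_attach s (fun x => (η (x + 1) - η (x - 1)) * pderivAt f x η)]
      apply Finset.sum_congr rfl
      intro x _
      rw [hpderiv x.1 (hsu x.2) η]
      rfl
    · rw [← Finset.sum_attach s (fun x => γ x * (f (flipAt x η) - f η))]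
      apply Finset.sum_congr rfl
      intro x _
      have e1 : f (flipAt x.1 η) = g (Function.update (projF u η) ⟨x.1, hsu x.2⟩
          (-(projF u η ⟨x.1, hsu x.2⟩))) := by
        rw [hfg (flipAt x.1 η)]
        exact congrArg g (hproj_upd η ⟨x.1, hsu x.2⟩ (-(η x.1)))
      rw [e1, hfg η]
  -- measurability
  have hAm : Measurable A := by
    apply Finset.measurable_sum
    intro x _
    exact ((measurable_pi_apply ⟨x.1 + 1, hplus x.1 x.2⟩).sub
      (measurable_pi_apply ⟨x.1 - 1, hminus x.1 x.2⟩)).mul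
      (measurable_pderivFin hgc hgd ⟨x.1, hsu x.2⟩)
  have hSm : Measurable S := by
    apply Finset.measurable_sum
    intro x _
    exact measurable_const.mul
      (((hgc.comp (continuous_id.update _ ((continuous_apply _).neg))).measurable).sub
        hgc.measurable)
  -- integrability of each term of A
  have hne1 : ∀ x : {x // x ∈ s}, (⟨x.1 + 1, hplus x.1 x.2⟩ : ↥u) ≠ ⟨x.1, hsu x.2⟩ := by
    intro x
    simp only [ne_eq, Subtype.mk.injEq]
    omega
  have hne2 : ∀ x : {x // x ∈ s}, (⟨x.1 - 1, hminus x.1 x.2⟩ : ↥u) ≠ ⟨x.1, hsu x.2⟩ := by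
    intro x
    simp only [ne_eq, Subtype.mk.injEq]
    omega
  have hAterm := fun (x : {x // x ∈ s}) =>
    integral_A_term (ι := ↥u) hv ⟨x.1, hsu x.2⟩ ⟨x.1 + 1, hplus x.1 x.2⟩
      ⟨x.1 - 1, hminus x.1 x.2⟩ (hne1 x) (hne2 x) hgc hgb hgd hgd'
  have hAint : Integrable A (Measure.pi fun _ : ↥u => gaussianReal 0 v) := by
    apply integrable_finset_sum
    intro x _
    exact (hAterm x).1
  have hSterm : ∀ x : {x // x ∈ s}, Integrable (fun y : ↥u → ℝ =>
      γ x.1 * (g (Function.update y ⟨x.1, hsu x.2⟩ (-(y ⟨x.1, hsu x.2⟩))) - g y))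
      (Measure.pi fun _ : ↥u => gaussianReal 0 v) := by
    intro x
    apply integrable_of_bounded (M := |γ x.1| * (M + M))
    · exact (measurable_const.mul
        (((hgc.comp (continuous_id.update _ ((continuous_apply _).neg))).measurable).sub
          hgc.measurable)).aestronglyMeasurable
    intro y
    rw [abs_mul]
    apply mul_le_mul_of_nonneg_left _ (abs_nonneg _)
    calc |g (Function.update y ⟨x.1, hsu x.2⟩ (-(y ⟨x.1, hsu x.2⟩))) - g y|
        ≤ |g (Function.update y ⟨x.1, hsu x.2⟩ (-(y ⟨x.1, hsu x.2⟩)))| + |g y| := abs_sub _ _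
    _ ≤ M + M := add_le_add (hgb _) (hgb _)
  have hSint : Integrable S (Measure.pi fun _ : ↥u => gaussianReal 0 v) := by
    apply integrable_finset_sum
    intro x _
    exact hSterm x
  have hGint : Integrable (fun y => A y + S y) (Measure.pi fun _ : ↥u => gaussianReal 0 v) :=
    hAint.add hSint
  have hGenfun : generator γ s f = fun η => (fun y => A y + S y) (projF u η) := funext hGen
  constructor
  · rw [hGenfun]
    exact (integrable_projF_iff hmap (hAm.add hSm).aestronglyMeasurable).2 hGint
  -- the integral vanishes
  rw [hGenfun]
  beta_reduce
  rw [integral_projF (G := fun y => A y + S y) hmap (hAm.add hSm).aestronglyMeasurable]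
  rw [integral_add hAint hSint]
  -- the S part vanishes by symmetry
  have hSzero : ∫ y, S y ∂(Measure.pi fun _ : ↥u => gaussianReal 0 v) = 0 := by
    rw [hSdef, integral_finset_sum _ (fun x _ => hSterm x)]
    apply Finset.sum_eq_zero
    intro x _
    rw [integral_const_mul]
    have hflip : Integrable (fun y : ↥u → ℝ =>
        g (Function.update y ⟨x.1, hsu x.2⟩ (-(y ⟨x.1, hsu x.2⟩))))
        (Measure.pi fun _ : ↥u => gaussianReal 0 v) := by
      apply integrable_of_bounded (M := M)
      · exact (hgc.comp (continuous_id.update _ ((continuous_apply _).neg))).aestronglyMeasurable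
      intro y
      exact hgb _
    have hgint : Integrable g (Measure.pi fun _ : ↥u => gaussianReal 0 v) :=
      integrable_of_bounded hgc.aestronglyMeasurable hgb
    rw [integral_sub hflip hgint, integral_flip_eq hv _ hgc hgb, sub_self, mul_zero]
  rw [hSzero, add_zero]
  -- the A part: integration by parts and telescoping
  set e : ℤ → ℝ := fun z => ∫ η, η (z + 1) * (η z * f η) ∂μ with hedef
  have he : ∀ (z : ℤ) (hz : z ∈ u) (hz1 : z + 1 ∈ u),
      ∫ y, y ⟨z + 1, hz1⟩ * (y ⟨z, hz⟩ * g y)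
        ∂(Measure.pi fun _ : ↥u => gaussianReal 0 v) = e z := by
    intro z hz hz1
    have hG'm : AEStronglyMeasurable (fun y : ↥u → ℝ => y ⟨z + 1, hz1⟩ * (y ⟨z, hz⟩ * g y))
        (Measure.pi fun _ : ↥u => gaussianReal 0 v) :=
      ((measurable_pi_apply ⟨z + 1, hz1⟩).mul ((measurable_pi_apply ⟨z, hz⟩).mul
        hgc.measurable)).aestronglyMeasurable
    rw [← integral_projF hmap hG'm]
    apply integral_congr_ae
    refine Eventually.of_forall fun η => ?_
    simp only [projF]
    rw [← hfg η]
  have hzero1 : ∀ (z : ℤ) (hz : z ∈ u) (hz1 : z + 1 ∈ u), z + 1 ∉ s → e z = 0 := by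
    intro z hz hz1 hns
    rw [← he z hz hz1]
    exact integral_prod3_eq_zero hv ⟨z + 1, hz1⟩ ⟨z, hz⟩
      (by simp only [ne_eq, Subtype.mk.injEq]; omega) hgc hgb (hindep _ hns)
  have hzero2 : ∀ (z : ℤ) (hz : z ∈ u) (hz1 : z + 1 ∈ u), z ∉ s → e z = 0 := by
    intro z hz hz1 hns
    rw [← he z hz hz1]
    have hcomm : ∀ y : ↥u → ℝ, y ⟨z + 1, hz1⟩ * (y ⟨z, hz⟩ * g y)
        = y ⟨z, hz⟩ * (y ⟨z + 1, hz1⟩ * g y) := fun y => by ring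
    rw [integral_congr_ae (Eventually.of_forall hcomm)]
    exact integral_prod3_eq_zero hv ⟨z, hz⟩ ⟨z + 1, hz1⟩
      (by simp only [ne_eq, Subtype.mk.injEq]; omega) hgc hgb (hindep _ hns)
  -- per-term IBP
  have hAeq : ∫ y, A y ∂(Measure.pi fun _ : ↥u => gaussianReal 0 v)
      = β * ∑ x ∈ s, (e x - e (x - 1)) := by
    rw [hAdef, integral_finset_sum _ (fun x _ => (hAterm x).1)]
    have hterm : ∀ x : {x // x ∈ s},
        ∫ y, (y ⟨x.1 + 1, hplus x.1 x.2⟩ - y ⟨x.1 - 1, hminus x.1 x.2⟩) *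
          pderivFin g ⟨x.1, hsu x.2⟩ y ∂(Measure.pi fun _ : ↥u => gaussianReal 0 v)
          = β * (e x.1 - e (x.1 - 1)) := by
      intro x
      rw [(hAterm x).2.2, hvβ]
      congr 1
      have hsplit : ∀ y : ↥u → ℝ,
          (y ⟨x.1 + 1, hplus x.1 x.2⟩ - y ⟨x.1 - 1, hminus x.1 x.2⟩) *
            (y ⟨x.1, hsu x.2⟩ * g y)
          = y ⟨x.1 + 1, hplus x.1 x.2⟩ * (y ⟨x.1, hsu x.2⟩ * g y)
            - y ⟨x.1 - 1, hminus x.1 x.2⟩ * (y ⟨x.1, hsu x.2⟩ * g y) := fun y => by ring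
      rw [integral_congr_ae (Eventually.of_forall hsplit)]
      rw [integral_sub (integrable_prod3 hv _ _ (hne1 x) hgc hgb)
        (integrable_prod3 hv _ _ (hne2 x) hgc hgb)]
      have h2 : (x.1 - 1) + 1 ∈ u := by
        rw [sub_add_cancel]
        exact hsu x.2
      have hfirst := he x.1 (hsu x.2) (hplus x.1 x.2)
      have hsecond := he (x.1 - 1) (hminus x.1 x.2) h2
      rw [hfirst]
      have hsw : ∀ y : ↥u → ℝ, y ⟨x.1 - 1, hminus x.1 x.2⟩ * (y ⟨x.1, hsu x.2⟩ * g y)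
          = y ⟨(x.1 - 1) + 1, h2⟩ * (y ⟨x.1 - 1, hminus x.1 x.2⟩ * g y) := by
        intro y
        have hxx : (⟨(x.1 - 1) + 1, h2⟩ : ↥u) = ⟨x.1, hsu x.2⟩ := Subtype.ext (by ring)
        rw [hxx]
        ring
      rw [integral_congr_ae (Eventually.of_forall hsw), hsecond]
    calc ∑ x ∈ s.attach, ∫ y, (y ⟨x.1 + 1, hplus x.1 x.2⟩ - y ⟨x.1 - 1, hminus x.1 x.2⟩) *
          pderivFin g ⟨x.1, hsu x.2⟩ y ∂(Measure.pi fun _ : ↥u => gaussianReal 0 v)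
        = ∑ x ∈ s.attach, β * (e x.1 - e (x.1 - 1)) := Finset.sum_congr rfl fun x _ => hterm x
    _ = β * ∑ x ∈ s.attach, (e x.1 - e (x.1 - 1)) := by rw [Finset.mul_sum]
    _ = β * ∑ x ∈ s, (e x - e (x - 1)) := by
        rw [Finset.sum_attach s (fun x => e x - e (x - 1))]
  rw [hAeq]
  -- telescoping
  have htel : ∑ x ∈ s, (e x - e (x - 1)) = 0 := by
    rw [Finset.sum_sub_distrib]
    have h1 : ∑ x ∈ s, e (x - 1) = ∑ z ∈ s.image (fun w => w - 1), e z :=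
      (Finset.sum_image (fun a _ b _ h => by omega)).symm
    rw [h1, ← Finset.sum_sdiff_sub_sum_sdiff]
    have hz1 : ∀ z ∈ s \ s.image (fun w => w - 1), e z = 0 := by
      intro z hzmem
      obtain ⟨hzs, hznot⟩ := Finset.mem_sdiff.1 hzmem
      have hz1s : z + 1 ∉ s := fun hc => hznot (Finset.mem_image.2 ⟨z + 1, hc, by ring⟩)
      exact hzero1 z (hsu hzs) (hplus z hzs) hz1s
    have hz2 : ∀ z ∈ s.image (fun w => w - 1) \ s, e z = 0 := by
      intro z hzmem
      obtain ⟨hzt, hzns⟩ := Finset.mem_sdiff.1 hzmem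
      obtain ⟨w, hws, hwz⟩ := Finset.mem_image.1 hzt
      have hz1s : z + 1 ∈ s := by
        rw [show z + 1 = w by omega]
        exact hws
      have hzu : z ∈ u := Finset.subset_union_right hzt
      exact hzero2 z hzu (hsu hz1s) hzns
    rw [Finset.sum_eq_zero hz1, Finset.sum_eq_zero hz2, sub_zero]
  rw [htel, mul_zero]
end
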